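/- arXiv:2505.08331 — 4 statements merged into one kernel-verified Lean document; each statement's English description precedes it below -/
import Mathlib

section
/- The maximal dimension of an abelian subalgebra of the free 2-step nilpotent Lie algebra on g ≥ 2 generators equals C(g,2) + 1, i.e., α(F_{g,2}) = g(g−1)/2 + 1. -/
open Module

def lieStab (K L : Type*) [Field K] [LieRing L] [LieAlgebra K L] (ℓ : Module.Dual K L) :
    Submodule K L where
  carrier := {y | ∀ x : L, ℓ ⁅x, y⁆ = 0}
  add_mem' := by
    intro a b ha hb x
    simp [lie_add, ha x, hb x]
  zero_mem' := by intro x; simp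
  smul_mem' := by
    intro c a ha x
    simp [lie_smul, ha x]

noncomputable def lieIndex (K L : Type*) [Field K] [LieRing L] [LieAlgebra K L] : ℕ :=
  sInf {d | ∃ ℓ : Module.Dual K L, d = Module.finrank K (lieStab K L ℓ)}

noncomputable def lieAlpha (K L : Type*) [Field K] [LieRing L] [LieAlgebra K L] : ℕ :=
  sSup {d | ∃ S : LieSubalgebra K L, IsLieAbelian (↥S) ∧ d = Module.finrank K (↥S)}

abbrev FreeNilpotentLie (K : Type*) [Field K] (g c : ℕ) :=
  FreeLieAlgebra K (Fin g) ⧸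
    LieModule.lowerCentralSeries K (FreeLieAlgebra K (Fin g)) (FreeLieAlgebra K (Fin g)) c

namespace AlphaFTS

variable (K : Type*) [Field K] (g : ℕ)

abbrev PairIdx (g : ℕ) := {p : Fin g × Fin g // p.1 < p.2}

/-- concrete model of the free 2-step nilpotent Lie algebra -/
def Hc : Type _ := (Fin g → K) × (PairIdx g → K)

instance : AddCommGroup (Hc K g) :=
  inferInstanceAs (AddCommGroup ((Fin g → K) × (PairIdx g → K)))
instance : Module K (Hc K g) :=
  inferInstanceAs (Module K ((Fin g → K) × (PairIdx g → K)))

variable {K g}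

/-- the alternating form -/
def om (v w : Fin g → K) : PairIdx g → K := fun p => v p.1.1 * w p.1.2 - v p.1.2 * w p.1.1

/-- constructor -/
def mkH (v : Fin g → K) (w : PairIdx g → K) : Hc K g := (v, w)

lemma fst_mkH (v : Fin g → K) (w : PairIdx g → K) : (mkH v w : Hc K g).1 = v := rfl
lemma snd_mkH (v : Fin g → K) (w : PairIdx g → K) : (mkH v w : Hc K g).2 = w := rfl

omit [Field K] in
lemma Hc.ext {x y : Hc K g} (h1 : x.1 = y.1) (h2 : x.2 = y.2) : x = y := Prod.ext h1 h2

instance : LieRing (Hc K g) where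
  bracket x y := mkH 0 (om x.1 y.1)
  add_lie x y z := by
    show mkH _ _ = mkH _ _ + mkH _ _
    refine Hc.ext ?_ (funext fun p => ?_)
    · show (0 : Fin g → K) = 0 + 0; simp
    · show om (x.1 + y.1) z.1 p = om x.1 z.1 p + om y.1 z.1 p
      simp only [om, Pi.add_apply]; ring
  lie_add x y z := by
    show mkH _ _ = mkH _ _ + mkH _ _
    refine Hc.ext ?_ (funext fun p => ?_)
    · show (0 : Fin g → K) = 0 + 0; simp
    · show om x.1 (y.1 + z.1) p = om x.1 y.1 p + om x.1 z.1 p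
      simp only [om, Pi.add_apply]; ring
  lie_self x := by
    show mkH _ _ = (0 : Hc K g)
    refine Hc.ext ?_ (funext fun p => ?_)
    · rfl
    · show om x.1 x.1 p = 0
      simp only [om]; ring
  leibniz_lie x y z := by
    show mkH _ _ = mkH _ _ + mkH _ _
    refine Hc.ext ?_ (funext fun p => ?_)
    · show (0 : Fin g → K) = 0 + 0; simp
    · show om x.1 (0 : Fin g → K) p = om (0 : Fin g → K) z.1 p + om y.1 (0 : Fin g → K) p
      simp [om]

instance : LieAlgebra K (Hc K g) where
  lie_smul t x y := by
    show mkH _ _ = t • mkH _ _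
    refine Hc.ext ?_ (funext fun p => ?_)
    · show (0 : Fin g → K) = t • 0; simp
    · show om x.1 (t • y.1) p = t • om x.1 y.1 p
      simp only [om, Pi.smul_apply, smul_eq_mul]; ring

lemma lie_def (x y : Hc K g) : ⁅x, y⁆ = mkH 0 (om x.1 y.1) := rfl


section Model
variable (K : Type*) [Field K] (g : ℕ)

def pairEquiv (g : ℕ) : PairIdx g ≃ Σ j : Fin g, Fin j.val where
  toFun p := ⟨p.1.2, ⟨p.1.1.val, p.2⟩⟩
  invFun x := ⟨(⟨x.2.val, lt_trans x.2.isLt x.1.isLt⟩, x.1), x.2.isLt⟩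
  left_inv p := by ext <;> rfl
  right_inv x := by rfl

lemma card_pairIdx : Fintype.card (PairIdx g) = g.choose 2 := by
  rw [Fintype.card_congr (pairEquiv g), Fintype.card_sigma]
  simp only [Fintype.card_fin]
  rw [Fin.sum_univ_eq_sum_range (fun j => j) g]
  have := Finset.sum_range_id_mul_two g
  have h2 := Nat.choose_two_right g
  omega

/-- identity linear equivalence with the product type -/
def toProd : Hc K g ≃ₗ[K] ((Fin g → K) × (PairIdx g → K)) where
  toFun x := x
  invFun x := x
  map_add' _ _ := rfl
  map_smul' _ _ := rfl
  left_inv _ := rfl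
  right_inv _ := rfl

instance : Module.Finite K (Hc K g) := Module.Finite.equiv (toProd K g).symm

lemma finrank_Hc : finrank K (Hc K g) = g + g.choose 2 := by
  rw [(toProd K g).finrank_eq, Module.finrank_prod, Module.finrank_pi, Module.finrank_pi,
    Fintype.card_fin, card_pairIdx]

variable {K g}

lemma om_single_single {i j : Fin g} (h : i < j) :
    om (Pi.single i (1:K)) (Pi.single j (1:K)) = Pi.single (⟨(i, j), h⟩ : PairIdx g) 1 := by
  funext p
  obtain ⟨⟨k, l⟩, hkl⟩ := p
  have hij : i ≠ j := ne_of_lt h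
  have hkl' : (k : Fin g) ≠ l := ne_of_lt hkl
  have hnot : ¬ (l = i ∧ k = j) := by
    rintro ⟨rfl, rfl⟩; exact absurd (lt_trans h hkl) (lt_irrefl _)
  simp only [om, Pi.single_apply, Subtype.mk.injEq, Prod.mk.injEq]
  by_cases h1 : k = i <;> by_cases h2 : l = j <;> by_cases h3 : l = i <;> by_cases h4 : k = j <;>
    simp_all

end Model


section Bounds
variable {K : Type*} [Field K] {g : ℕ}

lemma rank_le_one (U : Submodule K (Fin g → K))
    (h : ∀ v ∈ U, ∀ w ∈ U, om v w = (0 : PairIdx g → K)) : finrank K U ≤ 1 := by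
  rcases eq_or_ne U ⊥ with rfl | hU
  · simp
  · obtain ⟨v, hvU, hv⟩ := Submodule.ne_bot_iff U |>.1 hU
    obtain ⟨i, hvi⟩ : ∃ i, v i ≠ 0 := Function.ne_iff.1 hv
    have hle : U ≤ Submodule.span K {v} := by
      intro w hw
      have key : ∀ a b : Fin g, v a * w b = v b * w a := by
        intro a b
        rcases lt_trichotomy a b with hab | rfl | hab
        · have := congrFun (h v hvU w hw) ⟨(a, b), hab⟩
          simp only [om, Pi.zero_apply] at this
          linear_combination this
        · rfl
        · have := congrFun (h v hvU w hw) ⟨(b, a), hab⟩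
          simp only [om, Pi.zero_apply] at this
          linear_combination -this
      rw [Submodule.mem_span_singleton]
      refine ⟨w i / v i, funext fun j => ?_⟩
      show w i / v i * v j = w j
      rw [div_mul_eq_mul_div, div_eq_iff hvi]
      linear_combination -key i j
    calc finrank K U ≤ finrank K (Submodule.span K {v}) := Submodule.finrank_mono hle
      _ = 1 := finrank_span_singleton hv

lemma abelian_finrank_le (S : LieSubalgebra K (Hc K g)) (hS : IsLieAbelian S) :
    finrank K S ≤ g.choose 2 + 1 := by
  classical
  let f : S →ₗ[K] (Fin g → K) :=
    { toFun := fun s => (s : Hc K g).1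
      map_add' := fun _ _ => rfl
      map_smul' := fun _ _ => rfl }
  have hS' : FiniteDimensional K S := inferInstance
  have hrn := LinearMap.finrank_range_add_finrank_ker f
  have hrange : finrank K (LinearMap.range f) ≤ 1 := by
    apply rank_le_one
    rintro v ⟨s, rfl⟩ w ⟨t, rfl⟩
    have h0 : ⁅s, t⁆ = (0 : S) := trivial_lie_zero _ _ s t
    have h1 : ⁅(s : Hc K g), (t : Hc K g)⁆ = 0 := by
      rw [← LieSubalgebra.coe_bracket, h0, ZeroMemClass.coe_zero]
    have h2 := congrArg Prod.snd h1
    exact h2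
  have hker : finrank K (LinearMap.ker f) ≤ g.choose 2 := by
    let q : LinearMap.ker f →ₗ[K] (PairIdx g → K) :=
      { toFun := fun s => ((s : S) : Hc K g).2
        map_add' := fun _ _ => rfl
        map_smul' := fun _ _ => rfl }
    have hq : Function.Injective q := by
      intro a b hab
      ext : 2
      refine Hc.ext ?_ ?_
      · have ha := a.2
        have hb := b.2
        rw [LinearMap.mem_ker] at ha hb
        show ((a : S) : Hc K g).1 = ((b : S) : Hc K g).1
        rw [show ((a : S) : Hc K g).1 = f (a : S) from rfl, ha,
          show ((b : S) : Hc K g).1 = f (b : S) from rfl, hb]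
      · exact hab
    calc finrank K (LinearMap.ker f) ≤ finrank K (PairIdx g → K) :=
          LinearMap.finrank_le_finrank_of_injective hq
      _ = g.choose 2 := by rw [Module.finrank_pi, card_pairIdx]
  omega

variable (K g) in
def Asub (j0 : Fin g) : LieSubalgebra K (Hc K g) :=
  { carrier := {x : Hc K g | ∀ i, i ≠ j0 → x.1 i = 0}
    add_mem' := by
      intro a b ha hb i hi
      show a.1 i + b.1 i = 0
      rw [ha i hi, hb i hi, add_zero]
    zero_mem' := by intro i hi; rfl
    smul_mem' := by
      intro c a ha i hi
      show c * a.1 i = 0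
      rw [ha i hi, mul_zero]
    lie_mem' := by intro x y hx hy i hi; rfl }

lemma Asub_mem {j0 : Fin g} {x : Hc K g} : x ∈ Asub K g j0 ↔ ∀ i, i ≠ j0 → x.1 i = 0 :=
  Iff.rfl

lemma Asub_abelian (j0 : Fin g) : IsLieAbelian (Asub K g j0) := by
  constructor
  intro x y
  apply Subtype.ext
  show ⁅(x : Hc K g), (y : Hc K g)⁆ = 0
  refine Hc.ext ?_ (funext fun p => ?_)
  · rfl
  · show om (x : Hc K g).1 (y : Hc K g).1 p = 0
    obtain ⟨⟨k, l⟩, hkl⟩ := p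
    have hx := (Asub_mem).1 x.2
    have hy := (Asub_mem).1 y.2
    simp only [om]
    by_cases hk : k = j0
    · have hl : l ≠ j0 := fun h => absurd hkl (by simp [hk, h])
      rw [hx l hl, hy l hl]; ring
    · rw [hx k hk, hy k hk]; ring

variable (K g) in
def AsubEquiv (j0 : Fin g) : (Asub K g j0) ≃ₗ[K] K × (PairIdx g → K) where
  toFun s := ((s : Hc K g).1 j0, (s : Hc K g).2)
  invFun cw := ⟨(Pi.single j0 cw.1, cw.2), by
    intro i hi
    exact Pi.single_eq_of_ne hi _⟩
  map_add' _ _ := rfl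
  map_smul' _ _ := rfl
  left_inv s := by
    apply Subtype.ext
    refine Hc.ext (funext fun i => ?_) rfl
    by_cases hi : i = j0
    · subst hi; exact Pi.single_eq_same _ _
    · exact (Pi.single_eq_of_ne hi _).trans (((Asub_mem).1 s.2) i hi).symm
  right_inv cw := by
    refine Prod.ext ?_ rfl
    exact Pi.single_eq_same _ _

lemma finrank_Asub (j0 : Fin g) : finrank K (Asub K g j0) = g.choose 2 + 1 := by
  rw [(AsubEquiv K g j0).finrank_eq, Module.finrank_prod, Module.finrank_self,
    Module.finrank_pi, card_pairIdx]
  omega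

lemma lieAlpha_Hc (hg : 2 ≤ g) : lieAlpha K (Hc K g) = g.choose 2 + 1 := by
  have j0 : Fin g := ⟨0, by omega⟩
  apply le_antisymm
  · apply csSup_le
    · exact ⟨g.choose 2 + 1, Asub K g j0, Asub_abelian j0, (finrank_Asub j0).symm⟩
    · rintro d ⟨S, hab, rfl⟩
      exact abelian_finrank_le S hab
  · apply le_csSup
    · refine ⟨g.choose 2 + 1, ?_⟩
      rintro d ⟨S, hab, rfl⟩
      exact abelian_finrank_le S hab
    · exact ⟨Asub K g j0, Asub_abelian j0, (finrank_Asub j0).symm⟩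

end Bounds


section Transfer
variable {K L1 L2 : Type*} [Field K] [LieRing L1] [LieAlgebra K L1]
  [LieRing L2] [LieAlgebra K L2]

lemma map_abelian (e : L1 ≃ₗ⁅K⁆ L2) (S : LieSubalgebra K L1) (hS : IsLieAbelian S) :
    IsLieAbelian (S.map e.toLieHom) := by
  constructor
  intro x y
  apply Subtype.ext
  show ⁅(x : L2), (y : L2)⁆ = 0
  obtain ⟨a, ha, hax⟩ := (LieSubalgebra.mem_map _ _ _).1 x.2
  obtain ⟨b, hb, hby⟩ := (LieSubalgebra.mem_map _ _ _).1 y.2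
  have h0 : ⁅(⟨a, ha⟩ : S), (⟨b, hb⟩ : S)⁆ = 0 := trivial_lie_zero _ _ _ _
  have h0' : ⁅a, b⁆ = 0 := congrArg (Subtype.val) h0
  rw [← hax, ← hby, ← LieHom.map_lie, h0', map_zero]

lemma map_toSubmodule (e : L1 ≃ₗ⁅K⁆ L2) (S : LieSubalgebra K L1) :
    (S.map e.toLieHom).toSubmodule = S.toSubmodule.map (e.toLinearEquiv : L1 →ₗ[K] L2) := by
  ext x
  rw [LieSubalgebra.mem_toSubmodule, LieSubalgebra.mem_map, Submodule.mem_map]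
  rfl

lemma finrank_map_eq (e : L1 ≃ₗ⁅K⁆ L2) (S : LieSubalgebra K L1) :
    finrank K (S.map e.toLieHom) = finrank K S := by
  have : finrank K (S.map e.toLieHom).toSubmodule
      = finrank K S.toSubmodule := by
    rw [map_toSubmodule e S, LinearEquiv.finrank_map_eq]
  exact this

lemma lieAlpha_congr (e : L1 ≃ₗ⁅K⁆ L2) : lieAlpha K L1 = lieAlpha K L2 := by
  unfold lieAlpha
  congr 1
  ext d
  constructor
  · rintro ⟨S, hS, rfl⟩
    exact ⟨S.map e.toLieHom, map_abelian e S hS, (finrank_map_eq e S).symm⟩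
  · rintro ⟨S, hS, rfl⟩
    exact ⟨S.map e.symm.toLieHom, map_abelian e.symm S hS, (finrank_map_eq e.symm S).symm⟩

end Transfer

section FreeSide

variable (K : Type*) [Field K] (g : ℕ)

local notation "L'" => FreeLieAlgebra K (Fin g)

noncomputable def phi : FreeLieAlgebra K (Fin g) →ₗ⁅K⁆ Hc K g :=
  FreeLieAlgebra.lift K fun i => mkH (Pi.single i 1) 0

variable {K g}

lemma phi_of (i : Fin g) : phi K g (FreeLieAlgebra.of K i) = mkH (Pi.single i 1) 0 :=
  FreeLieAlgebra.lift_of_apply _ _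

lemma om_zero_right (v : Fin g → K) : om v (0 : Fin g → K) = 0 := by
  funext p; simp [om]

lemma om_zero_left (v : Fin g → K) : om (0 : Fin g → K) v = 0 := by
  funext p; simp [om]

lemma lieSpan_eq_top :
    LieSubalgebra.lieSpan K L' (Set.range (FreeLieAlgebra.of K)) = ⊤ := by
  set S := LieSubalgebra.lieSpan K L' (Set.range (FreeLieAlgebra.of K)) with hSdef
  let h : L' →ₗ⁅K⁆ S := FreeLieAlgebra.lift K fun i =>
    ⟨FreeLieAlgebra.of K i, LieSubalgebra.subset_lieSpan (Set.mem_range_self i)⟩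
  have hcomp : S.incl.comp h = LieHom.id := by
    rw [← FreeLieAlgebra.lift_comp_of (S.incl.comp h), ← FreeLieAlgebra.lift_comp_of LieHom.id]
    congr 1
    funext i
    show S.incl (h (FreeLieAlgebra.of K i)) = FreeLieAlgebra.of K i
    rw [show h (FreeLieAlgebra.of K i)
        = ⟨FreeLieAlgebra.of K i, LieSubalgebra.subset_lieSpan (Set.mem_range_self i)⟩
      from FreeLieAlgebra.lift_of_apply _ _]
    rfl
  rw [eq_top_iff]
  intro x _
  have hx : S.incl (h x) = x := by
    rw [show S.incl (h x) = (S.incl.comp h) x from rfl, hcomp]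
    rfl
  exact hx ▸ (h x).2

variable (K g) in
/-- generators: degree one and degree two -/
noncomputable def fgen : Fin g ⊕ (Fin g × Fin g) → L' :=
  Sum.elim (fun i => FreeLieAlgebra.of K i)
    (fun p => ⁅FreeLieAlgebra.of K p.1, FreeLieAlgebra.of K p.2⁆)

lemma mem_lcs1 (x y : L') :
    ⁅x, y⁆ ∈ LieModule.lowerCentralSeries K L' L' 1 := by
  rw [LieModule.lowerCentralSeries_succ, LieModule.lowerCentralSeries_zero]
  exact LieSubmodule.lie_mem_lie (LieSubmodule.mem_top x) (LieSubmodule.mem_top y)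

lemma mem_lcs2 (x : L') {m : L'} (hm : m ∈ LieModule.lowerCentralSeries K L' L' 1) :
    ⁅x, m⁆ ∈ LieModule.lowerCentralSeries K L' L' 2 := by
  rw [LieModule.lowerCentralSeries_succ]
  exact LieSubmodule.lie_mem_lie (LieSubmodule.mem_top x) hm

lemma top_decomp :
    (⊤ : Submodule K L') = Submodule.span K (Set.range (fgen K g)) ⊔
      (LieModule.lowerCentralSeries K L' L' 2).toSubmodule := by
  set Gs := Submodule.span K (Set.range (fgen K g)) with hGs
  set C2 := (LieModule.lowerCentralSeries K L' L' 2).toSubmodule with hC2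
  set U := Gs ⊔ C2 with hU
  have hbase : ∀ α β, ⁅fgen K g α, fgen K g β⁆ ∈ U := by
    rintro (i | p) (j | q)
    · refine Submodule.mem_sup_left (Submodule.subset_span ?_)
      exact ⟨Sum.inr (i, j), rfl⟩
    · refine Submodule.mem_sup_right ?_
      exact mem_lcs2 _ (mem_lcs1 _ _)
    · refine Submodule.mem_sup_right ?_
      have := mem_lcs2 (fgen K g (Sum.inl j)) (mem_lcs1 (FreeLieAlgebra.of K p.1) (FreeLieAlgebra.of K p.2))
      have h2 : ⁅fgen K g (Sum.inr p), fgen K g (Sum.inl j)⁆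
          = -⁅fgen K g (Sum.inl j), fgen K g (Sum.inr p)⁆ := (lie_skew _ _).symm
      rw [h2]
      exact neg_mem this
    · refine Submodule.mem_sup_right ?_
      exact mem_lcs2 _ (mem_lcs1 _ _)
  have hbil : ∀ a ∈ Gs, ∀ b ∈ Gs, ⁅a, b⁆ ∈ U := by
    intro a ha
    induction ha using Submodule.span_induction with
    | mem a hmem =>
      intro b hb
      induction hb using Submodule.span_induction with
      | mem b hmemb =>
        obtain ⟨α, rfl⟩ := hmem
        obtain ⟨β, rfl⟩ := hmemb
        exact hbase α β
      | zero => rw [lie_zero]; exact zero_mem U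
      | add y z _ _ hy hz => rw [lie_add]; exact add_mem hy hz
      | smul t y _ hy => rw [lie_smul]; exact Submodule.smul_mem U t hy
    | zero => intro b hb; rw [zero_lie]; exact zero_mem U
    | add y z _ _ hy hz => intro b hb; rw [add_lie]; exact add_mem (hy b hb) (hz b hb)
    | smul t y _ hy => intro b hb; rw [smul_lie]; exact Submodule.smul_mem U t (hy b hb)
  have hlie : ∀ a ∈ U, ∀ b ∈ U, ⁅a, b⁆ ∈ U := by
    intro a ha b hb
    obtain ⟨a1, ha1, a2, ha2, rfl⟩ := Submodule.mem_sup.1 ha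
    obtain ⟨b1, hb1, b2, hb2, rfl⟩ := Submodule.mem_sup.1 hb
    have hC2mem : ∀ x : L', ∀ m ∈ C2, ⁅x, m⁆ ∈ U := by
      intro x m hm
      exact Submodule.mem_sup_right ((LieModule.lowerCentralSeries K L' L' 2).lie_mem hm)
    have hC2mem' : ∀ x : L', ∀ m ∈ C2, ⁅m, x⁆ ∈ U := by
      intro x m hm
      rw [← lie_skew]
      exact neg_mem (hC2mem _ _ hm)
    simp only [lie_add, add_lie]
    exact add_mem (add_mem (hbil a1 ha1 b1 hb1) (hC2mem' _ _ ha2))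
      (add_mem (hC2mem _ _ hb2) (hC2mem' _ _ ha2))
  let Salg : LieSubalgebra K L' :=
    { carrier := (U : Set L')
      add_mem' := fun ha hb => add_mem ha hb
      zero_mem' := zero_mem U
      smul_mem' := fun c x hx => Submodule.smul_mem U c hx
      lie_mem' := fun {x y} hx hy => hlie x hx y hy }
  have htop : (⊤ : LieSubalgebra K L') ≤ Salg := by
    rw [← lieSpan_eq_top, LieSubalgebra.lieSpan_le]
    rintro x ⟨i, rfl⟩
    exact Submodule.mem_sup_left (Submodule.subset_span ⟨Sum.inl i, rfl⟩)
  apply le_antisymm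
  · intro x _
    exact htop (LieSubalgebra.mem_top x)
  · exact le_top

end FreeSide


section Kernel
variable {K : Type*} [Field K] {g : ℕ}

local notation "L'" => FreeLieAlgebra K (Fin g)

variable (K g) in
def fstH : Hc K g →ₗ[K] (Fin g → K) where
  toFun x := x.1
  map_add' _ _ := rfl
  map_smul' _ _ := rfl

variable (K g) in
def sndH : Hc K g →ₗ[K] (PairIdx g → K) where
  toFun x := x.2
  map_add' _ _ := rfl
  map_smul' _ _ := rfl

variable (K g) in
noncomputable def F1 : FreeLieAlgebra K (Fin g) →ₗ[K] (Fin g → K) :=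
  (fstH K g).comp (phi K g).toLinearMap

variable (K g) in
noncomputable def F2 : FreeLieAlgebra K (Fin g) →ₗ[K] (PairIdx g → K) :=
  (sndH K g).comp (phi K g).toLinearMap

lemma F1_apply (x : FreeLieAlgebra K (Fin g)) : F1 K g x = (phi K g x).1 := rfl
lemma F2_apply (x : FreeLieAlgebra K (Fin g)) : F2 K g x = (phi K g x).2 := rfl

lemma sum_single_smul {ι : Type*} [Fintype ι] [DecidableEq ι] (v : ι → K) :
    ∑ i, v i • (Pi.single i 1 : ι → K) = v :=
  calc ∑ i, v i • (Pi.single i 1 : ι → K) = ∑ i, Pi.single i (v i) := by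
        refine Finset.sum_congr rfl fun i _ => ?_
        rw [← Pi.single_smul, smul_eq_mul, mul_one]
    _ = v := Finset.univ_sum_single v

lemma phi_fst_lcs1 {m : L'} (hm : m ∈ LieModule.lowerCentralSeries K L' L' 1) :
    (phi K g m).1 = 0 := by
  let P : LieIdeal K L' :=
    { carrier := {m : L' | (phi K g m).1 = 0}
      add_mem' := by
        intro a b ha hb
        show (phi K g (a + b)).1 = 0
        rw [map_add]
        show (phi K g a).1 + (phi K g b).1 = 0
        rw [show (phi K g a).1 = 0 from ha, show (phi K g b).1 = 0 from hb, add_zero]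
      zero_mem' := by
        show (phi K g 0).1 = 0
        rw [map_zero]
        rfl
      smul_mem' := by
        intro c a ha
        show (phi K g (c • a)).1 = 0
        rw [map_smul]
        show c • (phi K g a).1 = 0
        rw [show (phi K g a).1 = 0 from ha, smul_zero]
      lie_mem := by
        intro x m _
        show (phi K g ⁅x, m⁆).1 = 0
        rw [LieHom.map_lie]
        rfl }
  have hle : LieModule.lowerCentralSeries K L' L' 1 ≤ P := by
    rw [LieModule.lowerCentralSeries_succ, LieModule.lowerCentralSeries_zero]
    rw [LieSubmodule.lie_le_iff]
    intro x _ m _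
    show (phi K g ⁅x, m⁆).1 = 0
    rw [LieHom.map_lie]
    rfl
  exact hle hm

lemma lcs2_le_ker : LieModule.lowerCentralSeries K L' L' 2 ≤ (phi K g).ker := by
  rw [show (2:ℕ) = 1 + 1 from rfl, LieModule.lowerCentralSeries_succ,
    LieSubmodule.lie_le_iff]
  intro x _ m hm
  rw [LieHom.mem_ker, LieHom.map_lie]
  show mkH 0 (om (phi K g x).1 (phi K g m).1) = 0
  rw [phi_fst_lcs1 hm, om_zero_right]
  rfl

lemma phi_fgen_inl (i : Fin g) : phi K g (fgen K g (Sum.inl i)) = mkH (Pi.single i 1) 0 :=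
  phi_of i

lemma phi_fgen_inr (p : Fin g × Fin g) :
    phi K g (fgen K g (Sum.inr p)) =
      mkH 0 (om (Pi.single p.1 (1:K)) (Pi.single p.2 (1:K))) := by
  show phi K g ⁅FreeLieAlgebra.of K p.1, FreeLieAlgebra.of K p.2⁆ = _
  rw [LieHom.map_lie, phi_of, phi_of]
  rfl

lemma om_skew (v w : Fin g → K) : om v w = -om w v := by
  funext p; simp only [om, Pi.neg_apply]; ring

lemma omval (k l : Fin g) (hkl : k < l) (p : Fin g × Fin g) :
    om (Pi.single p.1 (1:K)) (Pi.single p.2 (1:K)) ⟨(k, l), hkl⟩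
    = (if p = (k, l) then 1 else 0) - (if p = (l, k) then (1:K) else 0) := by
  have hkl' : k ≠ l := ne_of_lt hkl
  simp only [om, Pi.single_apply, Prod.ext_iff]
  by_cases h1' : k = p.1 <;> by_cases h2' : l = p.2 <;> by_cases h3' : l = p.1 <;>
    by_cases h4' : k = p.2 <;> simp_all [eq_comm]

lemma ker_le_lcs2 : (phi K g).ker ≤ LieModule.lowerCentralSeries K L' L' 2 := by
  classical
  intro x hx
  rw [LieHom.mem_ker] at hx
  have hx2 : x ∈ Submodule.span K (Set.range (fgen K g)) ⊔
      (LieModule.lowerCentralSeries K L' L' 2).toSubmodule :=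
    top_decomp (K := K) (g := g) ▸ Submodule.mem_top
  obtain ⟨a, ha, c, hc, rfl⟩ := Submodule.mem_sup.1 hx2
  obtain ⟨coef, hcoef⟩ := (Submodule.mem_span_range_iff_exists_fun K).1 ha
  set v : Fin g → K := fun i => coef (Sum.inl i) with hv
  set w : Fin g × Fin g → K := fun p => coef (Sum.inr p) with hw
  have hphic : phi K g c = 0 := by
    have := lcs2_le_ker (K := K) (g := g) hc
    rwa [LieHom.mem_ker] at this
  have hphia : phi K g a = 0 := by
    have : phi K g (a + c) = 0 := hx
    rw [map_add, hphic, add_zero] at this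
    exact this
  -- first components
  have hfst : ∀ i, v i = 0 := by
    have h1 : F1 K g a = 0 := by rw [F1_apply, hphia]; rfl
    rw [← hcoef, map_sum] at h1
    simp_rw [map_smul] at h1
    rw [Fintype.sum_sum_type] at h1
    have h2 : ∀ i : Fin g, v i • F1 K g (fgen K g (Sum.inl i))
        = v i • (Pi.single i 1 : Fin g → K) := by
      intro i; rw [F1_apply, phi_fgen_inl]; rfl
    have h3 : ∀ p : Fin g × Fin g, w p • F1 K g (fgen K g (Sum.inr p)) = 0 := by
      intro p; rw [F1_apply, phi_fgen_inr]; show w p • (0 : Fin g → K) = 0; rw [smul_zero]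
    rw [Finset.sum_congr rfl (fun i _ => h2 i), Finset.sum_congr rfl (fun p _ => h3 p),
      Finset.sum_const_zero, add_zero, sum_single_smul] at h1
    intro i
    exact congrFun h1 i
  -- second components
  have hsnd : ∀ (k l : Fin g) (hkl : k < l), w (k, l) = w (l, k) := by
    intro k l hkl
    have h1 : F2 K g a = 0 := by rw [F2_apply, hphia]; rfl
    rw [← hcoef, map_sum] at h1
    simp_rw [map_smul] at h1
    rw [Fintype.sum_sum_type] at h1
    have h2 : ∀ i : Fin g, v i • F2 K g (fgen K g (Sum.inl i)) = 0 := by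
      intro i; rw [F2_apply, phi_fgen_inl]; show v i • (0 : PairIdx g → K) = 0; rw [smul_zero]
    have h3 : ∀ p : Fin g × Fin g, w p • F2 K g (fgen K g (Sum.inr p))
        = w p • om (Pi.single p.1 (1:K)) (Pi.single p.2 (1:K)) := by
      intro p; rw [F2_apply, phi_fgen_inr]; rfl
    rw [Finset.sum_congr rfl (fun i _ => h2 i), Finset.sum_congr rfl (fun p _ => h3 p),
      Finset.sum_const_zero, zero_add] at h1
    have h4 := congrFun h1 (⟨(k, l), hkl⟩ : PairIdx g)
    rw [Finset.sum_apply] at h4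
    have hval : ∀ p : Fin g × Fin g,
        (w p • om (Pi.single p.1 (1:K)) (Pi.single p.2 (1:K))) (⟨(k, l), hkl⟩ : PairIdx g)
        = (if p = (k, l) then w p else 0) - (if p = (l, k) then w p else 0) := by
      intro p
      show w p * om (Pi.single p.1 (1:K)) (Pi.single p.2 (1:K)) ⟨(k, l), hkl⟩ = _
      rw [omval k l hkl p, mul_sub, mul_ite, mul_one, mul_zero, mul_ite, mul_one, mul_zero]
    rw [Finset.sum_congr rfl (fun p _ => hval p), Finset.sum_sub_distrib,
      Finset.sum_ite_eq' Finset.univ ((k, l) : Fin g × Fin g) w,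
      Finset.sum_ite_eq' Finset.univ ((l, k) : Fin g × Fin g) w] at h4
    simp only [Finset.mem_univ, if_true, Pi.zero_apply] at h4
    exact sub_eq_zero.1 h4
  -- now a = 0
  have ha0 : a = 0 := by
    rw [← hcoef, Fintype.sum_sum_type]
    have h2 : ∀ i : Fin g, coef (Sum.inl i) • fgen K g (Sum.inl i) = 0 := by
      intro i
      rw [show coef (Sum.inl i) = v i from rfl, hfst i, zero_smul]
    have h3 : ∑ p : Fin g × Fin g, coef (Sum.inr p) • fgen K g (Sum.inr p) = 0 := by
      apply Finset.sum_ninvolution Prod.swap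
      · intro p
        by_cases hp : p.1 = p.2
        · have e1 : fgen K g (Sum.inr p) = 0 := by
            show ⁅FreeLieAlgebra.of K p.1, FreeLieAlgebra.of K p.2⁆ = 0
            rw [hp, lie_self]
          have e2 : fgen K g (Sum.inr p.swap) = 0 := by
            show ⁅FreeLieAlgebra.of K p.2, FreeLieAlgebra.of K p.1⁆ = 0
            rw [hp, lie_self]
          rw [e1, e2, smul_zero, smul_zero, add_zero]
        · have hsw : coef (Sum.inr p) = coef (Sum.inr p.swap) := by
            rcases lt_trichotomy p.1 p.2 with h | h | h
            · exact hsnd p.1 p.2 h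
            · exact absurd h hp
            · exact (hsnd p.2 p.1 h).symm
          have e3 : fgen K g (Sum.inr p.swap) = -fgen K g (Sum.inr p) := by
            show ⁅FreeLieAlgebra.of K p.2, FreeLieAlgebra.of K p.1⁆
              = -⁅FreeLieAlgebra.of K p.1, FreeLieAlgebra.of K p.2⁆
            rw [lie_skew]
          rw [e3, ← hsw, smul_neg, add_neg_cancel]
      · intro p hne hswp
        apply hne
        have : p.1 = p.2 := by
          have h5 := congrArg Prod.fst hswp
          exact h5.symm
        have e1 : fgen K g (Sum.inr p) = 0 := by
          show ⁅FreeLieAlgebra.of K p.1, FreeLieAlgebra.of K p.2⁆ = 0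
          rw [this, lie_self]
        rw [e1, smul_zero]
      · intro p; exact Finset.mem_univ _
      · intro p; exact Prod.swap_swap p
    rw [Finset.sum_congr rfl (fun i _ => h2 i), Finset.sum_const_zero, zero_add, h3]
  rw [ha0, zero_add]
  exact hc

lemma phi_ker_eq : (phi K g).ker = LieModule.lowerCentralSeries K L' L' 2 :=
  le_antisymm ker_le_lcs2 lcs2_le_ker

lemma phi_surj : Function.Surjective (phi K g) := by
  intro z
  refine ⟨(∑ i, z.1 i • FreeLieAlgebra.of K i) +
    ∑ q : PairIdx g, z.2 q • ⁅FreeLieAlgebra.of K q.1.1, FreeLieAlgebra.of K q.1.2⁆, ?_⟩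
  refine Hc.ext ?_ ?_
  · show F1 K g _ = z.1
    rw [map_add, map_sum, map_sum]
    simp_rw [map_smul]
    have h2 : ∀ i : Fin g, z.1 i • F1 K g (FreeLieAlgebra.of K i)
        = z.1 i • (Pi.single i 1 : Fin g → K) := by
      intro i; rw [F1_apply, phi_of]; rfl
    have h3 : ∀ q : PairIdx g,
        z.2 q • F1 K g ⁅FreeLieAlgebra.of K q.1.1, FreeLieAlgebra.of K q.1.2⁆ = 0 := by
      intro q
      rw [F1_apply, LieHom.map_lie, phi_of, phi_of]
      show z.2 q • (0 : Fin g → K) = 0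
      rw [smul_zero]
    rw [Finset.sum_congr rfl (fun i _ => h2 i), Finset.sum_congr rfl (fun q _ => h3 q),
      Finset.sum_const_zero, add_zero, sum_single_smul]
  · show F2 K g _ = z.2
    rw [map_add, map_sum, map_sum]
    simp_rw [map_smul]
    have h2 : ∀ i : Fin g, z.1 i • F2 K g (FreeLieAlgebra.of K i) = 0 := by
      intro i; rw [F2_apply, phi_of]
      show z.1 i • (0 : PairIdx g → K) = 0
      rw [smul_zero]
    have h3 : ∀ q : PairIdx g,
        z.2 q • F2 K g ⁅FreeLieAlgebra.of K q.1.1, FreeLieAlgebra.of K q.1.2⁆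
        = z.2 q • (Pi.single q 1 : PairIdx g → K) := by
      intro q
      rw [F2_apply, LieHom.map_lie, phi_of, phi_of]
      show z.2 q • om (Pi.single q.1.1 (1:K)) (Pi.single q.1.2 (1:K)) = _
      rw [om_single_single q.2]
    rw [Finset.sum_congr rfl (fun i _ => h2 i), Finset.sum_congr rfl (fun q _ => h3 q),
      Finset.sum_const_zero, zero_add, sum_single_smul]

end Kernel

end AlphaFTS

/-- `α(F_{g,2}) = C(g,2) + 1` for all `g ≥ 2`. -/
theorem alpha_free_two_step
    (K : Type*) [Field K] [CharZero K] (g : ℕ) (hg : 2 ≤ g) :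
    lieAlpha K (FreeNilpotentLie K g 2) = Nat.choose g 2 + 1 := by
  have e1 := (AlphaFTS.phi K g).quotKerEquivRange
  rw [AlphaFTS.phi_ker_eq] at e1
  have hr : (AlphaFTS.phi K g).range = ⊤ := (LieHom.range_eq_top _).2 AlphaFTS.phi_surj
  rw [hr] at e1
  have e : FreeNilpotentLie K g 2 ≃ₗ⁅K⁆ AlphaFTS.Hc K g := e1.trans LieSubalgebra.topEquiv
  rw [AlphaFTS.lieAlpha_congr e, AlphaFTS.lieAlpha_Hc hg]
end

section
/- Let g be the 2-step nilpotent Lie algebra associated to a finite simple graph G(V,E). Then χ(g) = |V| + |E| − 2ν(G), where ν(G) is the matching number of G. -/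
open Module

noncomputable def matchingNumber {V : Type*} (G : SimpleGraph V) : ℕ :=
  sSup {m | ∃ M : Finset (Sym2 V), ↑M ⊆ G.edgeSet ∧
    (∀ e ∈ M, ∀ f ∈ M, e ≠ f → ∀ v : V, v ∈ e → v ∉ f) ∧ M.card = m}

/-- `b` is a basis exhibiting `L` as the graph Lie algebra of the simple graph `G`:
vertices and edges index the basis, the bracket of two adjacent vertices (in increasing
order) is the corresponding edge vector, non-adjacent vertices commute, and the edge
vectors are central. -/
def IsGraphLieBasis {V K L : Type*} [Fintype V] [LinearOrder V] [Field K] [LieRing L]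
    [LieAlgebra K L] (G : SimpleGraph V) (b : Basis (V ⊕ ↥G.edgeSet) K L) : Prop :=
  (∀ i j : V, i < j → ∀ e : ↥G.edgeSet, (e : Sym2 V) = s(i, j) →
      ⁅b (Sum.inl i), b (Sum.inl j)⁆ = b (Sum.inr e)) ∧
  (∀ i j : V, ¬ G.Adj i j → ⁅b (Sum.inl i), b (Sum.inl j)⁆ = 0) ∧
  (∀ (e : ↥G.edgeSet) (x : L), ⁅x, b (Sum.inr e)⁆ = 0)



section auxiliary
open Matrix Submodule

variable {K : Type*} [Field K]

/-- Jacobi-type identity: for an invertible block matrix `M`,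
`det M * det ((M⁻¹)₁₁) = det (M₂₂)`. -/
theorem jacobi_two {α β : Type*} [Fintype α] [Fintype β] [DecidableEq α] [DecidableEq β]
    (M : Matrix (α ⊕ β) (α ⊕ β) K) (hM : IsUnit M.det) :
    M.det * ((M⁻¹).toBlocks₁₁).det = (M.toBlocks₂₂).det := by
  set N := M⁻¹ with hN
  have h1 : M * N = 1 := M.mul_nonsing_inv hM
  have hMb : M = fromBlocks M.toBlocks₁₁ M.toBlocks₁₂ M.toBlocks₂₁ M.toBlocks₂₂ :=
    (fromBlocks_toBlocks M).symm
  have hNb : N = fromBlocks N.toBlocks₁₁ N.toBlocks₁₂ N.toBlocks₂₁ N.toBlocks₂₂ :=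
    (fromBlocks_toBlocks N).symm
  have h2 : M * fromBlocks N.toBlocks₁₁ 0 N.toBlocks₂₁ 1 =
      fromBlocks 1 M.toBlocks₁₂ 0 M.toBlocks₂₂ := by
    rw [hMb] at h1 ⊢
    rw [hNb] at h1
    rw [fromBlocks_multiply] at h1 ⊢
    have e11 := congrArg Matrix.toBlocks₁₁ h1
    have e21 := congrArg Matrix.toBlocks₂₁ h1
    simp only [toBlocks_fromBlocks₁₁, toBlocks_fromBlocks₂₁, ← fromBlocks_one,
      Matrix.mul_zero, Matrix.mul_one, add_zero] at e11 e21 ⊢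
    rw [e11, e21]
    simp [toBlocks_fromBlocks₁₂, toBlocks_fromBlocks₂₂]
  have := congrArg Matrix.det h2
  rw [det_mul, det_fromBlocks_zero₁₂, det_fromBlocks_zero₂₁, det_one, mul_one, det_one,
    one_mul] at this
  exact this


theorem matching_of_skew_det {V : Type*} [Fintype V] [DecidableEq V] [CharZero K]
    (G : SimpleGraph V) (A : Matrix V V K)
    (hskew : ∀ i j, A j i = - A i j) (hsupp : ∀ i j, A i j ≠ 0 → G.Adj i j) :
    ∀ (n : ℕ) (s : Finset V), s.card = n →
    (A.submatrix ((↑) : ↥s → V) ((↑) : ↥s → V)).det ≠ 0 →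
    ∃ M : Finset (Sym2 V), ↑M ⊆ G.edgeSet ∧
      (∀ e ∈ M, ∀ f ∈ M, e ≠ f → ∀ v : V, v ∈ e → v ∉ f) ∧
      (∀ e ∈ M, ∀ v : V, v ∈ e → v ∈ s) ∧ 2 * M.card = s.card := by
  intro n
  induction n using Nat.strong_induction_on with
  | _ n IH =>
    intro s hcard hdet
    classical
    rcases s.eq_empty_or_nonempty with hs | hs
    · exact ⟨∅, by simp, by simp, by simp, by simp [hs]⟩
    obtain ⟨x₀, hx₀⟩ := hs
    set B : Matrix ↥s ↥s K := A.submatrix (↑) (↑) with hB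
    have hdiag : ∀ i j : ↥s, B j i = - B i j := fun i j => hskew _ _
    have half : ∀ a : K, a = -a → a = 0 := by
      intro a ha
      have h2 : (2 : K) * a = 0 := by linear_combination ha
      exact (mul_eq_zero.mp h2).resolve_left two_ne_zero
    have hdiag0 : ∀ i : ↥s, B i i = 0 := fun i => half _ (hdiag i i)
    have hU : IsUnit B.det := isUnit_iff_ne_zero.mpr hdet
    have h1 : B * B⁻¹ = 1 := B.mul_nonsing_inv hU
    set x : ↥s := ⟨x₀, hx₀⟩ with hx
    have hxx : (B * B⁻¹) x x = 1 := by rw [h1]; simp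
    rw [Matrix.mul_apply] at hxx
    have hex : ∃ y : ↥s, B x y * B⁻¹ y x ≠ 0 := by
      by_contra h
      push_neg at h
      rw [Finset.sum_eq_zero (fun y _ => h y)] at hxx
      exact zero_ne_one hxx
    obtain ⟨y, hy⟩ := hex
    have hBxy : B x y ≠ 0 := fun h => hy (by simp [h])
    have hByx : B⁻¹ y x ≠ 0 := fun h => hy (by simp [h])
    have hyx : y ≠ x := by
      intro h
      exact hBxy (by rw [h]; exact hdiag0 x)
    have hadj : G.Adj ↑x ↑y := hsupp _ _ hBxy
    -- B⁻¹ is skew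
    have hBt : Bᵀ = -B := by
      ext i j
      rw [Matrix.transpose_apply, Matrix.neg_apply]
      exact hdiag i j
    have hBinvskew : B⁻¹ᵀ = -B⁻¹ := by
      rw [Matrix.transpose_nonsing_inv, hBt]
      refine Matrix.inv_eq_left_inv ?_
      rw [Matrix.neg_mul, Matrix.mul_neg, neg_neg, B.nonsing_inv_mul hU]
    have hinvskew : ∀ i j : ↥s, B⁻¹ j i = - B⁻¹ i j := by
      intro i j
      have := congrFun (congrFun hBinvskew i) j
      simpa [Matrix.transpose_apply] using this
    have hinvdiag : ∀ i : ↥s, B⁻¹ i i = 0 := fun i => half _ (hinvskew i i)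
    set c : K := B⁻¹ x y with hc
    have hcne : c ≠ 0 := by
      rw [hc, hinvskew y x]
      simpa using hByx
    -- block decomposition
    set p : ↥s → Prop := fun z => z = x ∨ z = y with hp
    set e : {z // p z} ⊕ {z // ¬ p z} ≃ ↥s := Equiv.sumCompl p with he
    set M' : Matrix ({z // p z} ⊕ {z // ¬ p z}) ({z // p z} ⊕ {z // ¬ p z}) K :=
      B.submatrix e e with hM'
    have hdetM' : M'.det = B.det := Matrix.det_submatrix_equiv_self e B
    have hUM' : IsUnit M'.det := by rw [hdetM']; exact hU
    have hM'inv : M'⁻¹ = (B⁻¹).submatrix e e := by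
      refine Matrix.inv_eq_left_inv ?_
      rw [hM', Matrix.submatrix_mul_equiv, B.nonsing_inv_mul hU, Matrix.submatrix_one_equiv]
    have hjac := jacobi_two M' hUM'
    -- the 2×2 block
    set q : Fin 2 ≃ {z : ↥s // p z} :=
      { toFun := ![⟨x, Or.inl rfl⟩, ⟨y, Or.inr rfl⟩]
        invFun := fun z => if (z : ↥s) = x then 0 else 1
        left_inv := by
          intro i
          fin_cases i
          · simp
          · simp [hyx]
        right_inv := by
          rintro ⟨z, hz⟩
          dsimp only
          split_ifs with h
          · exact Subtype.ext h.symm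
          · rcases hz with hz | hz
            · exact absurd hz h
            · exact Subtype.ext hz.symm } with hq
    have hq0 : (q 0 : ↥s) = x := rfl
    have hq1 : (q 1 : ↥s) = y := rfl
    have hdet11 : ((M'⁻¹).toBlocks₁₁).det = c * c := by
      rw [← Matrix.det_submatrix_equiv_self q, Matrix.det_fin_two, hM'inv]
      have hentry : ∀ i j : Fin 2,
          (((B⁻¹).submatrix e e).toBlocks₁₁).submatrix q q i j = B⁻¹ (q i : ↥s) (q j : ↥s) := by
        intro i j
        simp [Matrix.toBlocks₁₁, Matrix.submatrix_apply, he, Equiv.sumCompl_apply_inl]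
      rw [hentry 0 0, hentry 1 1, hentry 0 1, hentry 1 0, hq0, hq1,
        hinvdiag x, hinvdiag y, hinvskew x y]
      ring
    have hdet22 : (M'.toBlocks₂₂).det = B.det * (c * c) := by
      rw [← hjac, hdet11, hdetM']
    have hdet22ne : (M'.toBlocks₂₂).det ≠ 0 := by
      rw [hdet22]; exact mul_ne_zero hdet (mul_ne_zero hcne hcne)
    -- the smaller vertex set
    set s' : Finset V := (s.erase ↑x).erase ↑y with hs'
    have hyx' : (↑y : V) ≠ ↑x := fun h => hyx (Subtype.ext h)
    have hy_in : ↑y ∈ s.erase ↑x := Finset.mem_erase.mpr ⟨hyx', y.2⟩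
    have hxnot : (↑x : V) ∉ s' := by simp [hs', Finset.mem_erase]
    have hynot : (↑y : V) ∉ s' := by simp [hs', Finset.mem_erase]
    have hmem' : ∀ v : V, v ∈ s' → v ∈ s := by
      intro v hv
      exact Finset.mem_of_mem_erase (Finset.mem_of_mem_erase hv)
    set h2 : ↥s' ≃ {z : ↥s // ¬ p z} :=
      { toFun := fun v => ⟨⟨v.1, hmem' _ v.2⟩, by
          rintro (h | h)
          · have hvx : (v : V) = ↑x := congrArg Subtype.val h
            have hv2 : (v : V) ∈ s.erase ↑x := Finset.mem_of_mem_erase v.2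
            exact (Finset.mem_erase.mp hv2).1 hvx
          · exact (Finset.mem_erase.mp v.2).1 (congrArg Subtype.val h)⟩
        invFun := fun z => ⟨z.1.1, Finset.mem_erase.mpr
          ⟨fun h => z.2 (Or.inr (Subtype.ext h)), Finset.mem_erase.mpr
            ⟨fun h => z.2 (Or.inl (Subtype.ext h)), z.1.2⟩⟩⟩
        left_inv := fun v => rfl
        right_inv := fun z => rfl } with hh2
    have hsub' : A.submatrix ((↑) : ↥s' → V) ((↑) : ↥s' → V)
        = (M'.toBlocks₂₂).submatrix h2 h2 := by
      ext i j
      show A i.1 j.1 = M'.toBlocks₂₂ (h2 i) (h2 j)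
      rw [hM']
      show A i.1 j.1 = B (e (Sum.inr (h2 i))) (e (Sum.inr (h2 j)))
      rw [he]
      rw [Equiv.sumCompl_apply_inr, Equiv.sumCompl_apply_inr]
      rfl
    have hdets' : (A.submatrix ((↑) : ↥s' → V) ((↑) : ↥s' → V)).det ≠ 0 := by
      rw [hsub', Matrix.det_submatrix_equiv_self h2]
      exact hdet22ne
    have hnpos : 0 < n := hcard ▸ Finset.card_pos.mpr ⟨x₀, hx₀⟩
    have hn2 : 2 ≤ n := by
      have : 1 < s.card := Finset.one_lt_card.mpr ⟨↑x, x.2, ↑y, y.2, hyx'.symm⟩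
      omega
    have e1 : (s.erase ↑x).card = n - 1 := by rw [Finset.card_erase_of_mem x.2, hcard]
    have e2 : s'.card = n - 2 := by
      rw [hs', Finset.card_erase_of_mem hy_in, e1]
      omega
    have hlt : s'.card < n := by omega
    obtain ⟨M₀, hM₀e, hM₀d, hM₀s, hM₀c⟩ := IH s'.card hlt s' rfl hdets'
    have hxy_notM₀ : s(↑x, ↑y) ∉ M₀ := by
      intro h
      exact hxnot (hM₀s _ h ↑x (Sym2.mem_mk_left _ _))
    refine ⟨insert s(↑x, ↑y) M₀, ?_, ?_, ?_, ?_⟩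
    · rw [Finset.coe_insert]
      exact Set.insert_subset (G.mem_edgeSet.mpr hadj) hM₀e
    · intro e' he' f' hf' hef v hve
      rcases Finset.mem_insert.mp he' with he' | he' <;>
        rcases Finset.mem_insert.mp hf' with hf' | hf'
      · exact absurd (he'.trans hf'.symm) hef
      · intro hvf
        have hvs' : v ∈ s' := hM₀s _ hf' v hvf
        rw [he'] at hve
        rcases Sym2.mem_iff.mp hve with h | h
        · exact hxnot (h ▸ hvs')
        · exact hynot (h ▸ hvs')
      · have hvs' : v ∈ s' := hM₀s _ he' v hve
        intro hvf
        rw [hf'] at hvf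
        rcases Sym2.mem_iff.mp hvf with h | h
        · exact hxnot (h ▸ hvs')
        · exact hynot (h ▸ hvs')
      · exact hM₀d e' he' f' hf' hef v hve
    · intro e' he' v hv
      rcases Finset.mem_insert.mp he' with he' | he'
      · rw [he'] at hv
        rcases Sym2.mem_iff.mp hv with h | h
        · exact h ▸ x.2
        · exact h ▸ y.2
      · exact hmem' v (hM₀s _ he' v hv)
    · rw [Finset.card_insert_of_notMem hxy_notM₀, hcard]
      omega


theorem exists_principal_submatrix_det_ne_zero {V : Type*} [Fintype V] [DecidableEq V]
    (A : Matrix V V K) (hskew : ∀ i j, A j i = - A i j) :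
    ∃ t : Finset V, t.card = A.rank ∧
      (A.submatrix ((↑) : ↥t → V) ((↑) : ↥t → V)).det ≠ 0 := by
  classical
  obtain ⟨I, (hIli : LinearIndependent K (fun x : ↥I => Aᵀ (x : V))), hImax⟩ :=
    exists_maximal_linearIndepOn K (fun j : V => Aᵀ j)
  set t : Finset V := I.toFinset with ht
  have htI : ∀ j : V, j ∈ t ↔ j ∈ I := fun j => Set.mem_toFinset
  have hli : LinearIndependent K (fun j : ↥t => Aᵀ (j : V)) := by
    have h := hIli.comp (Equiv.subtypeEquivRight htI)
      (Equiv.subtypeEquivRight htI).injective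
    have hfe : ((fun x : ↥I => Aᵀ (x : V)) ∘ (Equiv.subtypeEquivRight htI))
        = fun j : ↥t => Aᵀ (j : V) := by
      funext j; rfl
    rwa [hfe] at h
  have hspan : ∀ k : V, Aᵀ k ∈ span K (Set.range fun m : ↥t => Aᵀ (m : V)) := by
    intro k
    have himg : (fun j : V => Aᵀ j) '' I = Set.range fun m : ↥t => Aᵀ (m : V) := by
      ext w
      constructor
      · rintro ⟨j, hj, rfl⟩
        exact ⟨⟨j, (htI j).mpr hj⟩, rfl⟩
      · rintro ⟨⟨j, hj⟩, rfl⟩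
        exact ⟨j, (htI j).mp hj, rfl⟩
    by_cases hk : k ∈ I
    · exact subset_span ⟨⟨k, (htI k).mpr hk⟩, rfl⟩
    · obtain ⟨a, ha, hmem⟩ := hImax k hk
      rw [himg] at hmem
      have : a⁻¹ • (a • Aᵀ k) ∈ span K (Set.range fun m : ↥t => Aᵀ (m : V)) :=
        Submodule.smul_mem _ _ hmem
      rwa [smul_smul, inv_mul_cancel₀ ha, one_smul] at this
  have hspaneq : span K (Set.range Aᵀ) = span K (Set.range fun m : ↥t => Aᵀ (m : V)) := by
    apply le_antisymm
    · rw [span_le]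
      rintro w ⟨k, rfl⟩
      exact hspan k
    · apply span_mono
      rintro w ⟨m, rfl⟩
      exact ⟨m, rfl⟩
  have hcard : t.card = A.rank := by
    rw [A.rank_eq_finrank_span_cols]
    change t.card = finrank K ↥(span K (Set.range Aᵀ))
    rw [hspaneq, finrank_span_eq_card hli, Fintype.card_coe]
  refine ⟨t, hcard, ?_⟩
  set T : Matrix ↥t ↥t K := A.submatrix (↑) (↑) with hT
  intro hdet
  obtain ⟨v, hvne, hvmul⟩ := (Matrix.exists_mulVec_eq_zero_iff).mpr hdet
  set w : V → K := fun i => ∑ j : ↥t, v j * A i (j : V) with hw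
  have hwt : ∀ m : ↥t, (∑ j : ↥t, v j * A (m : V) (j : V)) = 0 := by
    intro m
    have := congrFun hvmul m
    simp only [Matrix.mulVec, dotProduct, hT, Matrix.submatrix_apply,
      Pi.zero_apply] at this
    simpa [mul_comm] using this
  have hwzero : w = 0 := by
    funext k
    obtain ⟨d, hd⟩ := (mem_span_range_iff_exists_fun K).mp (hspan k)
    have hcolk : ∀ j : V, A j k = ∑ m : ↥t, d m * A j (m : V) := by
      intro j
      have := congrFun hd j
      simpa [Finset.sum_apply, Matrix.transpose_apply] using this.symm
    have hAk : ∀ j : ↥t, A k (j : V) = - ∑ m : ↥t, d m * A (j : V) (m : V) := by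
      intro j
      rw [hskew (j : V) k, hcolk (j : V)]
    have hinner : ∀ m : ↥t, ∑ j : ↥t, v j * A (j : V) (m : V) = 0 := by
      intro m
      have hflip : ∑ j : ↥t, v j * A (j : V) (m : V)
          = - ∑ j : ↥t, v j * A (m : V) (j : V) := by
        rw [← Finset.sum_neg_distrib]
        exact Finset.sum_congr rfl fun j _ => by rw [hskew (m : V) (j : V)]; ring
      rw [hflip, hwt m, neg_zero]
    calc w k = ∑ j : ↥t, v j * A k (j : V) := rfl
    _ = ∑ j : ↥t, ∑ m : ↥t, v j * (- (d m * A (j : V) (m : V))) := by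
        refine Finset.sum_congr rfl fun j _ => ?_
        rw [hAk j, mul_neg, Finset.mul_sum, ← Finset.sum_neg_distrib]
        exact Finset.sum_congr rfl fun m _ => by ring
    _ = ∑ m : ↥t, ∑ j : ↥t, v j * (- (d m * A (j : V) (m : V))) := Finset.sum_comm
    _ = ∑ m : ↥t, (- d m) * ∑ j : ↥t, v j * A (j : V) (m : V) := by
        refine Finset.sum_congr rfl fun m _ => ?_
        rw [Finset.mul_sum]
        exact Finset.sum_congr rfl fun j _ => by ring
    _ = 0 := Finset.sum_eq_zero fun m _ => by rw [hinner m, mul_zero]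
  have hvz : ∀ j : ↥t, v j = 0 := by
    have h0 : (∑ j : ↥t, v j • Aᵀ (j : V)) = 0 := by
      funext k
      simp only [Finset.sum_apply, Pi.smul_apply, smul_eq_mul, Matrix.transpose_apply,
        Pi.zero_apply]
      exact congrFun hwzero k
    exact fun j => Fintype.linearIndependent_iff.mp hli v h0 j
  exact hvne (funext fun j => hvz j)


end auxiliary

section graphLieHelpers

variable {V K L : Type*} [Fintype V] [LinearOrder V] [Field K] [CharZero K] [LieRing L]
    [LieAlgebra K L] [FiniteDimensional K L] {G : SimpleGraph V} [Fintype ↥G.edgeSet]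
    (b : Basis (V ⊕ ↥G.edgeSet) K L)

theorem graphLie_bracket_expand (hb : IsGraphLieBasis G b) (ℓ : Module.Dual K L) (y : L)
    (i : V) :
    ℓ ⁅b (Sum.inl i), y⁆
      = ∑ j : V, b.repr y (Sum.inl j) * ℓ ⁅b (Sum.inl i), b (Sum.inl j)⁆ := by
  set F : L →ₗ[K] K := ℓ.comp (LieAlgebra.ad K L (b (Sum.inl i))) with hF
  have hFa : ∀ z : L, F z = ℓ ⁅b (Sum.inl i), z⁆ := fun z => rfl
  rw [← hFa]
  conv_lhs => rw [← Basis.sum_repr b y]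
  rw [map_sum, Fintype.sum_sum_type]
  have h2 : ∀ e : ↥G.edgeSet, F (b.repr y (Sum.inr e) • b (Sum.inr e)) = 0 := by
    intro e
    rw [map_smul, hFa, hb.2.2 e, map_zero, smul_zero]
  rw [Finset.sum_congr rfl fun e _ => h2 e, Finset.sum_const_zero, add_zero]
  refine Finset.sum_congr rfl fun j _ => ?_
  rw [map_smul, hFa, smul_eq_mul]



theorem graphLie_stab_finrank (hb : IsGraphLieBasis G b) (ℓ : Module.Dual K L) :
    finrank K (lieStab K L ℓ)
        + (Matrix.of fun i j : V => ℓ ⁅b (Sum.inl i), b (Sum.inl j)⁆).rank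
      = Fintype.card V + Fintype.card ↥G.edgeSet := by
  classical
  set A := Matrix.of fun i j : V => ℓ ⁅b (Sum.inl i), b (Sum.inl j)⁆ with hA
  set ρ : L →ₗ[K] (V → K) :=
    (LinearMap.funLeft K K Sum.inl).comp
      (((Finsupp.linearEquivFunOnFinite K K (V ⊕ ↥G.edgeSet)).toLinearMap).comp
        b.repr.toLinearMap) with hρ
  have hρ_apply : ∀ (y : L) (j : V), ρ y j = b.repr y (Sum.inl j) := fun y j => rfl
  have hρ_surj : Function.Surjective ρ := by
    intro v
    refine ⟨b.repr.symm (Finsupp.equivFunOnFinite.symm (Sum.elim v 0)), ?_⟩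
    funext j
    rw [hρ_apply, LinearEquiv.apply_symm_apply]
    simp
  set ψ : L →ₗ[K] (V → K) := (Matrix.mulVecLin A).comp ρ with hψ
  have hψ_apply : ∀ (y : L) (i : V), ψ y i = ℓ ⁅b (Sum.inl i), y⁆ := by
    intro y i
    rw [graphLie_bracket_expand b hb ℓ y i]
    show (A.mulVec fun j => b.repr y (Sum.inl j)) i = _
    rw [Matrix.mulVec, dotProduct]
    exact Finset.sum_congr rfl fun j _ => by rw [mul_comm]; rfl
  have hker : lieStab K L ℓ = LinearMap.ker ψ := by
    ext y
    constructor
    · intro hy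
      rw [LinearMap.mem_ker]
      funext i
      exact (hψ_apply y i).trans (hy _)
    · intro hy
      have hy' : ψ y = 0 := hy
      set φ : L →ₗ[K] K :=
        { toFun := fun x => ℓ ⁅x, y⁆
          map_add' := fun a c => by rw [add_lie, map_add]
          map_smul' := fun t a => by rw [smul_lie, map_smul]; rfl } with hφdef
      have hφ : φ = 0 := by
        apply b.ext
        rintro (i | e)
        · show ℓ ⁅b (Sum.inl i), y⁆ = 0
          rw [← hψ_apply y i, hy']
          rfl
        · show ℓ ⁅b (Sum.inr e), y⁆ = 0
          rw [← lie_skew, hb.2.2 e y, neg_zero, map_zero]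
      intro x
      exact LinearMap.congr_fun hφ x
  have hrange : LinearMap.range ψ = LinearMap.range (Matrix.mulVecLin A) :=
    LinearMap.range_comp_of_range_eq_top _ (LinearMap.range_eq_top.mpr hρ_surj)
  have hrn := ψ.finrank_range_add_finrank_ker
  rw [hrange] at hrn
  have htot : finrank K L = Fintype.card V + Fintype.card ↥G.edgeSet := by
    rw [finrank_eq_card_basis b, Fintype.card_sum]
  have hrank : A.rank = finrank K (LinearMap.range A.mulVecLin) := rfl
  rw [hker, hrank]
  omega


theorem graphLie_bracket_adj (hb : IsGraphLieBasis G b) {i j : V} (hij : G.Adj i j) :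
    ⁅b (Sum.inl i), b (Sum.inl j)⁆ = b (Sum.inr ⟨s(i,j), G.mem_edgeSet.mpr hij⟩) ∨
    ⁅b (Sum.inl i), b (Sum.inl j)⁆ = - b (Sum.inr ⟨s(i,j), G.mem_edgeSet.mpr hij⟩) := by
  rcases lt_trichotomy i j with h | h | h
  · exact Or.inl (hb.1 i j h _ rfl)
  · exact absurd h hij.ne
  · right
    have h1 : ⁅b (Sum.inl j), b (Sum.inl i)⁆
        = b (Sum.inr ⟨s(j,i), G.mem_edgeSet.mpr hij.symm⟩) := hb.1 j i h _ rfl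
    have h2 : (⟨s(j,i), G.mem_edgeSet.mpr hij.symm⟩ : ↥G.edgeSet)
        = ⟨s(i,j), G.mem_edgeSet.mpr hij⟩ := Subtype.ext Sym2.eq_swap
    rw [← lie_skew, h1, h2]



set_option maxHeartbeats 1000000 in
theorem graphLie_small_stab (hb : IsGraphLieBasis G b) (M₀ : Finset (Sym2 V))
    (hM₀e : ↑M₀ ⊆ G.edgeSet)
    (hM₀d : ∀ e ∈ M₀, ∀ f ∈ M₀, e ≠ f → ∀ v : V, v ∈ e → v ∉ f) :
    ∃ ℓ : Module.Dual K L,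
      finrank K (lieStab K L ℓ)
        ≤ Fintype.card V + Fintype.card ↥G.edgeSet - 2 * M₀.card := by
  classical
  have hout : ∀ e : Sym2 V, s(e.out.1, e.out.2) = e := fun e => by
    rw [Sym2.mk, e.out_eq]
  set T : Finset V := M₀.biUnion (fun e => {e.out.1, e.out.2}) with hT
  have hmemT : ∀ v : V, v ∈ T ↔ ∃ e ∈ M₀, v ∈ e := by
    intro v
    rw [Finset.mem_biUnion]
    constructor
    · rintro ⟨e, he, hv⟩
      refine ⟨e, he, ?_⟩
      rcases Finset.mem_insert.mp hv with h | h
      · rw [← hout e]; exact Sym2.mem_iff.mpr (Or.inl h)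
      · rw [← hout e]; exact Sym2.mem_iff.mpr (Or.inr (Finset.mem_singleton.mp h))
    · rintro ⟨e, he, hv⟩
      refine ⟨e, he, ?_⟩
      rw [← hout e] at hv
      rcases Sym2.mem_iff.mp hv with h | h
      · exact Finset.mem_insert.mpr (Or.inl h)
      · exact Finset.mem_insert.mpr (Or.inr (Finset.mem_singleton.mpr h))
  have hTcard : T.card = 2 * M₀.card := by
    rw [hT, Finset.card_biUnion]
    · have : ∀ e ∈ M₀, ({e.out.1, e.out.2} : Finset V).card = 2 := by
        intro e he
        refine Finset.card_pair ?_
        intro hdiag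
        exact G.not_isDiag_of_mem_edgeSet (hM₀e he)
          (by rw [← hout e]; exact Sym2.mk_isDiag_iff.mpr hdiag)
      rw [Finset.sum_congr rfl this, Finset.sum_const, smul_eq_mul, mul_comm]
    · intro e he f hf hef
      rw [Function.onFun, Finset.disjoint_left]
      intro a hae haf
      have h1 : a ∈ e := by
        rw [← hout e]
        rcases Finset.mem_insert.mp hae with h | h
        · exact Sym2.mem_iff.mpr (Or.inl h)
        · exact Sym2.mem_iff.mpr (Or.inr (Finset.mem_singleton.mp h))
      have h2 : a ∈ f := by
        rw [← hout f]
        rcases Finset.mem_insert.mp haf with h | h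
        · exact Sym2.mem_iff.mpr (Or.inl h)
        · exact Sym2.mem_iff.mpr (Or.inr (Finset.mem_singleton.mp h))
      exact hM₀d e he f hf hef a h1 h2
  set ℓ₀ : Module.Dual K L :=
    ∑ e : ↥G.edgeSet, (if (e : Sym2 V) ∈ M₀ then b.coord (Sum.inr e) else 0) with hℓ₀
  have heval : ∀ e' : ↥G.edgeSet,
      ℓ₀ (b (Sum.inr e')) = if (e' : Sym2 V) ∈ M₀ then 1 else 0 := by
    intro e'
    rw [hℓ₀, LinearMap.sum_apply]
    rw [Finset.sum_eq_single e']
    · rw [apply_ite (fun g : Module.Dual K L => g (b (Sum.inr e')))]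
      rw [Basis.coord_apply, Basis.repr_self, Finsupp.single_eq_same]
      simp
    · intro c _ hne
      rw [apply_ite (fun g : Module.Dual K L => g (b (Sum.inr e')))]
      rw [Basis.coord_apply, Basis.repr_self, Finsupp.single_apply,
        if_neg (fun h => hne (Sum.inr_injective h).symm), LinearMap.zero_apply, ite_self]
    · intro h
      exact absurd (Finset.mem_univ e') h
  refine ⟨ℓ₀, ?_⟩
  set Sc : Finset (V ⊕ ↥G.edgeSet) := Finset.univ \ T.image Sum.inl with hSc
  have hstab_le : lieStab K L ℓ₀ ≤
      Submodule.comap (b.repr : L →ₗ[K] ((V ⊕ ↥G.edgeSet) →₀ K))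
        (Finsupp.supported K K ↑Sc) := by
    intro y hy
    rw [Submodule.mem_comap]
    rw [Finsupp.mem_supported']
    intro c hc
    have hc' : c ∈ T.image Sum.inl := by
      by_contra hcon
      exact hc (Finset.mem_coe.mpr (Finset.mem_sdiff.mpr ⟨Finset.mem_univ c, hcon⟩))
    obtain ⟨v, hvT, rfl⟩ := Finset.mem_image.mp hc'
    obtain ⟨e, heM, hve⟩ := (hmemT v).mp hvT
    have he_edge : e ∈ G.edgeSet := hM₀e heM
    obtain ⟨w, hew⟩ := Sym2.mem_iff_exists.mp hve
    have hvw : v ≠ w := by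
      intro h
      exact G.not_isDiag_of_mem_edgeSet he_edge
        (by rw [hew]; exact Sym2.mk_isDiag_iff.mpr h)
    have hadj : G.Adj v w := G.mem_edgeSet.mp (hew ▸ he_edge)
    have h0 : ℓ₀ ⁅b (Sum.inl w), y⁆ = 0 := hy _
    rw [graphLie_bracket_expand b hb ℓ₀ y w] at h0
    -- all terms except j = v vanish
    have hterm : ∀ j : V, j ∈ Finset.univ → j ≠ v →
        b.repr y (Sum.inl j) * ℓ₀ ⁅b (Sum.inl w), b (Sum.inl j)⁆ = 0 := by
      intro j _ hjv
      by_cases hwj : G.Adj w j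
      · have hnm : s(w, j) ∉ M₀ := by
          intro hmem
          by_cases hef : s(w, j) = e
          · rw [hew] at hef
            rcases Sym2.eq_iff.mp hef with ⟨h1, h2⟩ | ⟨h1, h2⟩
            · exact hvw h1.symm
            · exact hjv h2
          · exact hM₀d _ hmem _ heM hef w (Sym2.mem_mk_left w j)
              (by rw [hew]; exact Sym2.mem_iff.mpr (Or.inr rfl))
        have hval : ℓ₀ ⁅b (Sum.inl w), b (Sum.inl j)⁆ = 0 := by
          rcases graphLie_bracket_adj b hb hwj with hcase | hcase
          · rw [hcase, heval, if_neg hnm]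
          · rw [hcase, map_neg, heval, if_neg hnm, neg_zero]
        rw [hval, mul_zero]
      · rw [hb.2.1 w j hwj, map_zero, mul_zero]
    rw [Finset.sum_eq_single_of_mem v (Finset.mem_univ v) hterm] at h0
    -- and coefficient at v is ±1
    have hwv : G.Adj w v := hadj.symm
    have hWV : s(w, v) ∈ M₀ := by
      have : s(w, v) = e := by rw [hew]; exact Sym2.eq_swap
      rw [this]; exact heM
    have hvalv : ℓ₀ ⁅b (Sum.inl w), b (Sum.inl v)⁆ = 1 ∨
        ℓ₀ ⁅b (Sum.inl w), b (Sum.inl v)⁆ = -1 := by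
      rcases graphLie_bracket_adj b hb hwv with hcase | hcase
      · left; rw [hcase, heval, if_pos hWV]
      · right; rw [hcase, map_neg, heval, if_pos hWV]
    rcases hvalv with hv1 | hv1 <;> rw [hv1] at h0
    · rwa [mul_one] at h0
    · have := h0
      rw [mul_neg, mul_one, neg_eq_zero] at this
      exact this
  -- dimension count
  have hfin1 : finrank K (lieStab K L ℓ₀) ≤
      finrank K (Submodule.comap (b.repr : L →ₗ[K] ((V ⊕ ↥G.edgeSet) →₀ K))
        (Finsupp.supported K K ↑Sc)) :=
    Submodule.finrank_mono hstab_le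
  have hfin2 : finrank K (Submodule.comap (b.repr : L →ₗ[K] ((V ⊕ ↥G.edgeSet) →₀ K))
        (Finsupp.supported K K ↑Sc))
      = finrank K (Finsupp.supported K K (↑Sc : Set (V ⊕ ↥G.edgeSet))) :=
    LinearEquiv.finrank_eq (LinearEquiv.ofSubmodule' b.repr _)
  have hfin3 : finrank K (Finsupp.supported K K (↑Sc : Set (V ⊕ ↥G.edgeSet)))
      = Fintype.card ↥(↑Sc : Set (V ⊕ ↥G.edgeSet)) := by
    rw [LinearEquiv.finrank_eq (Finsupp.supportedEquivFinsupp _), finrank_finsupp_self]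
  have hfin4 : Fintype.card ↥(↑Sc : Set (V ⊕ ↥G.edgeSet)) = Sc.card := Fintype.card_coe _
  have hScCard : Sc.card = Fintype.card V + Fintype.card ↥G.edgeSet - 2 * M₀.card := by
    rw [hSc, Finset.card_sdiff_of_subset (Finset.subset_univ _), Finset.card_univ,
      Finset.card_image_of_injective _ Sum.inl_injective, hTcard, Fintype.card_sum]
  omega



end graphLieHelpers

section matchingHelpers

variable {V : Type*} [Fintype V] (G : SimpleGraph V) [Fintype ↥G.edgeSet]

theorem matchingNumber_bddAbove : BddAbove {m | ∃ M : Finset (Sym2 V), ↑M ⊆ G.edgeSet ∧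
    (∀ e ∈ M, ∀ f ∈ M, e ≠ f → ∀ v : V, v ∈ e → v ∉ f) ∧ M.card = m} := by
  classical
  refine ⟨G.edgeFinset.card, ?_⟩
  rintro m ⟨M, hM, -, rfl⟩
  exact Finset.card_le_card fun e he => SimpleGraph.mem_edgeFinset.mpr (hM he)

theorem matchingNumber_spec : ∃ M : Finset (Sym2 V), ↑M ⊆ G.edgeSet ∧
    (∀ e ∈ M, ∀ f ∈ M, e ≠ f → ∀ v : V, v ∈ e → v ∉ f) ∧ M.card = matchingNumber G := by
  classical
  have hmem := Nat.sSup_mem (s := {m | ∃ M : Finset (Sym2 V), ↑M ⊆ G.edgeSet ∧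
      (∀ e ∈ M, ∀ f ∈ M, e ≠ f → ∀ v : V, v ∈ e → v ∉ f) ∧ M.card = m})
    ⟨0, ∅, by simp, by simp, rfl⟩ (matchingNumber_bddAbove G)
  exact hmem

theorem le_matchingNumber (M : Finset (Sym2 V)) (hMe : ↑M ⊆ G.edgeSet)
    (hMd : ∀ e ∈ M, ∀ f ∈ M, e ≠ f → ∀ v : V, v ∈ e → v ∉ f) :
    M.card ≤ matchingNumber G :=
  le_csSup (matchingNumber_bddAbove G) ⟨M, hMe, hMd, rfl⟩

end matchingHelpers

/-- The index of the graph Lie algebra of a finite simple graph `G(V,E)` is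
`|V| + |E| − 2ν(G)`. -/
theorem index_graph_lie_algebra
    {V K L : Type*} [Fintype V] [LinearOrder V] [Field K] [CharZero K] [LieRing L]
    [LieAlgebra K L] [FiniteDimensional K L] (G : SimpleGraph V) [Fintype ↥G.edgeSet]
    (b : Basis (V ⊕ ↥G.edgeSet) K L) (hb : IsGraphLieBasis G b) :
    lieIndex K L = Fintype.card V + Fintype.card ↥G.edgeSet - 2 * matchingNumber G := by
  classical
  obtain ⟨M₀, hM₀e, hM₀d, hM₀c⟩ := matchingNumber_spec G
  obtain ⟨ℓ₀, hℓ₀⟩ := graphLie_small_stab b hb M₀ hM₀e hM₀d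
  rw [hM₀c] at hℓ₀
  have hlow : ∀ d ∈ {d | ∃ ℓ : Module.Dual K L, d = Module.finrank K (lieStab K L ℓ)},
      Fintype.card V + Fintype.card ↥G.edgeSet - 2 * matchingNumber G ≤ d := by
    rintro d ⟨ℓ, rfl⟩
    set A := Matrix.of fun i j : V => ℓ ⁅b (Sum.inl i), b (Sum.inl j)⁆ with hA
    have hkey : Module.finrank K (lieStab K L ℓ) + A.rank
        = Fintype.card V + Fintype.card ↥G.edgeSet := graphLie_stab_finrank b hb ℓ
    have hskew : ∀ i j, A j i = - A i j := by
      intro i j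
      show ℓ ⁅b (Sum.inl j), b (Sum.inl i)⁆ = - ℓ ⁅b (Sum.inl i), b (Sum.inl j)⁆
      rw [← lie_skew, map_neg]
    have hsupp : ∀ i j, A i j ≠ 0 → G.Adj i j := by
      intro i j hne
      by_contra hadj
      refine hne ?_
      show ℓ ⁅b (Sum.inl i), b (Sum.inl j)⁆ = 0
      rw [hb.2.1 i j hadj, map_zero]
    have hrank : A.rank ≤ 2 * matchingNumber G := by
      obtain ⟨t, htcard, htdet⟩ := exists_principal_submatrix_det_ne_zero A hskew
      obtain ⟨M, hMe, hMd, -, hMc⟩ := matching_of_skew_det G A hskew hsupp t.card t rfl htdet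
      have hle := le_matchingNumber G M hMe hMd
      omega
    omega
  rw [lieIndex]
  apply le_antisymm
  · exact le_trans (Nat.sInf_le ⟨ℓ₀, rfl⟩) hℓ₀
  · exact le_csInf ⟨_, ⟨ℓ₀, rfl⟩⟩ hlow
end

section
/- Let g be the graph Lie algebra of a finite simple graph G(V,E), and let {{i₁,j₁},...,{i_m,j_m}} be a matching of G. If ℓ is the sum of the dual basis vectors corresponding to the central basis elements x_{i_k j_k}, then dim g(ℓ) = dim g − 2m. -/
open Module

lemma sym2_mem_pair {α : Type*} [LinearOrder α] (x : Sym2 α) (v : α) :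
    v ∈ ({x.inf, x.sup} : Finset α) ↔ v ∈ x := by
  induction x using Sym2.ind with
  | _ a b =>
    rcases le_total a b with h | h <;>
      simp [inf_eq_left.2 h, sup_eq_right.2 h, inf_eq_right.2 h, sup_eq_left.2 h,
        Sym2.mem_iff, or_comm]

lemma sym2_inf_ne_sup {α : Type*} [LinearOrder α] (x : Sym2 α) (h : ¬ x.IsDiag) :
    x.inf ≠ x.sup := by
  induction x using Sym2.ind with
  | _ a b =>
    simp only [Sym2.mk_isDiag_iff] at h
    rcases le_total a b with h' | h' <;>
      simp [inf_eq_left.2 h', sup_eq_right.2 h', inf_eq_right.2 h', sup_eq_left.2 h', h,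
        Ne.symm h]

/-- For a matching `M` of `G`, the functional `ℓ` given by the sum of the dual basis
vectors of the corresponding central edge vectors satisfies `dim g(ℓ) = dim g − 2|M|`. -/
theorem stab_dim_of_matching
    {V K L : Type*} [Fintype V] [LinearOrder V] [Field K] [CharZero K] [LieRing L]
    [LieAlgebra K L] [FiniteDimensional K L] (G : SimpleGraph V)
    (b : Basis (V ⊕ ↥G.edgeSet) K L) (hb : IsGraphLieBasis G b)
    (M : Finset ↥G.edgeSet)
    (hM : ∀ e ∈ M, ∀ f ∈ M, e ≠ f → ∀ v : V, v ∈ (e : Sym2 V) → v ∉ (f : Sym2 V)) :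
    Module.finrank K
        (lieStab K L (∑ e ∈ M, b.coord (Sum.inr e))) =
      Module.finrank K L - 2 * M.card := by
  classical
  haveI : Fintype (V ⊕ ↥G.edgeSet) := FiniteDimensional.fintypeBasisIndex b
  set ℓ : Module.Dual K L := ∑ e ∈ M, b.coord (Sum.inr e) with hℓ
  -- value of ℓ on basis vectors
  have ell_edge : ∀ f : ↥G.edgeSet, ℓ (b (Sum.inr f)) = if f ∈ M then 1 else 0 := by
    intro f
    rw [hℓ]
    simp [Basis.coord_apply, Basis.repr_self, Finsupp.single_apply, Finset.sum_ite_eq']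
  -- brackets of adjacent vertices
  have brkt : ∀ i j : V, G.Adj i j → ∀ e : ↥G.edgeSet, (e : Sym2 V) = s(i, j) →
      ⁅b (Sum.inl i), b (Sum.inl j)⁆ = b (Sum.inr e) ∨
      ⁅b (Sum.inl i), b (Sum.inl j)⁆ = - b (Sum.inr e) := by
    intro i j hadj e he
    rcases lt_or_gt_of_ne hadj.ne with h | h
    · exact Or.inl (hb.1 i j h e he)
    · right
      have := hb.1 j i h e (by rw [he, Sym2.eq_swap])
      rw [← lie_skew, this]
  -- ℓ kills brackets with unmatched vertices
  have hzero : ∀ i k : V, (∀ e ∈ M, i ∉ (e : Sym2 V)) →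
      ℓ ⁅b (Sum.inl k), b (Sum.inl i)⁆ = 0 := by
    intro i k hi
    by_cases hadj : G.Adj k i
    · have hmem : s(k, i) ∈ G.edgeSet := hadj
      have hiM : (⟨s(k, i), hmem⟩ : ↥G.edgeSet) ∉ M := by
        intro hm
        exact hi _ hm (by simp)
      rcases brkt k i hadj ⟨s(k, i), hmem⟩ rfl with h | h <;>
        rw [h] <;> simp [ell_edge, hiM]
    · rw [hb.2.1 k i hadj, map_zero]
  -- the set of matched vertices
  set S : Finset V := M.biUnion (fun e => {(e : Sym2 V).inf, (e : Sym2 V).sup}) with hS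
  have memS : ∀ v : V, v ∈ S ↔ ∃ e ∈ M, v ∈ (e : Sym2 V) := by
    intro v
    simp only [hS, Finset.mem_biUnion, sym2_mem_pair]
  have cardS : S.card = 2 * M.card := by
    rw [hS, Finset.card_biUnion]
    · rw [Finset.sum_congr rfl (g := fun _ => 2) (fun e he => ?_)]
      · simp [mul_comm]
      · exact Finset.card_pair
          (sym2_inf_ne_sup _ (G.not_isDiag_of_mem_edgeSet e.2))
    · intro e he f hf hef
      simp only [Function.onFun]
      rw [Finset.disjoint_left]
      intro v hv hv'
      rw [sym2_mem_pair] at hv hv'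
      exact hM e he f hf hef v hv hv'
  set T : Finset (V ⊕ ↥G.edgeSet) := (S.image Sum.inl)ᶜ with hT
  -- the stabilizer is the span of the basis vectors indexed by T
  have hstab : lieStab K L ℓ = Submodule.span K (b '' ↑T) := by
    apply le_antisymm
    · intro y hy
      have hy' : ∀ x : L, ℓ ⁅x, y⁆ = 0 := hy
      rw [Basis.mem_span_image]
      intro u hu
      by_contra huT
      obtain ⟨i, hiS, rfl⟩ : ∃ x ∈ S, Sum.inl x = u := by simpa [hT] using huT
      obtain ⟨e, heM, hie⟩ := (memS i).mp hiS
      set j : V := Sym2.Mem.other hie with hj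
      have hspec : s(i, j) = (e : Sym2 V) := Sym2.other_spec hie
      have hji : j ≠ i := Sym2.other_ne (G.not_isDiag_of_mem_edgeSet e.2) hie
      have hadj : G.Adj i j := by
        rw [← SimpleGraph.mem_edgeSet, hspec]; exact e.2
      -- the linear functional x ↦ ℓ⁅b (inl j), x⁆
      set g : L →ₗ[K] K :=
        { toFun := fun x => ℓ ⁅b (Sum.inl j), x⁆
          map_add' := fun a c => by simp [lie_add]
          map_smul' := fun c a => by simp [lie_smul] } with hg
      set c : K := ℓ ⁅b (Sum.inl j), b (Sum.inl i)⁆ with hc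
      have hgc : g = c • b.coord (Sum.inl i) := by
        apply b.ext
        intro w
        match w with
        | Sum.inr f =>
          simp [hg, hb.2.2 f, Basis.coord_apply, Basis.repr_self, Finsupp.single_apply]
        | Sum.inl k =>
          by_cases hk : k = i
          · subst hk
            simp [hg, hc, Basis.coord_apply, Basis.repr_self]
          · have hlhs : ℓ ⁅b (Sum.inl j), b (Sum.inl k)⁆ = 0 := by
              by_cases hadj' : G.Adj j k
              · have hmem : s(j, k) ∈ G.edgeSet := hadj'
                have hnM : (⟨s(j, k), hmem⟩ : ↥G.edgeSet) ∉ M := by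
                  intro hm
                  have hje : j ∈ (e : Sym2 V) := by rw [← hspec]; simp
                  have hjf : j ∈ (s(j, k) : Sym2 V) := by simp
                  by_cases hef : e = (⟨s(j, k), hmem⟩ : ↥G.edgeSet)
                  · apply hk
                    have : s(i, j) = s(j, k) := by rw [hspec, hef]
                    rcases Sym2.eq_iff.mp this with ⟨h1, h2⟩ | ⟨h1, h2⟩
                    · exact absurd h1.symm hji
                    · exact h1.symm
                  · exact hM e heM _ hm hef j hje hjf
                rcases brkt j k hadj' ⟨s(j, k), hmem⟩ rfl with h | h <;>
                  rw [h] <;> simp [ell_edge, hnM]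
              · rw [hb.2.1 j k hadj', map_zero]
            simp [hg, hlhs, Basis.coord_apply, Basis.repr_self,
              Finsupp.single_apply, hk, Ne.symm hk]
      have hcne : c ≠ 0 := by
        have he' : (e : Sym2 V) = s(j, i) := by rw [← hspec, Sym2.eq_swap]
        rcases brkt j i hadj.symm e he' with h | h <;>
          rw [hc, h] <;> simp [ell_edge, heM]
      have h0 : g y = 0 := hy' (b (Sum.inl j))
      rw [hgc] at h0
      simp only [LinearMap.smul_apply, smul_eq_mul, Basis.coord_apply] at h0
      have : b.repr y (Sum.inl i) = 0 := by
        rcases mul_eq_zero.mp h0 with h | h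
        · exact absurd h hcne
        · exact h
      exact (Finsupp.mem_support_iff.mp hu) this
    · rw [Submodule.span_le]
      rintro _ ⟨u, hu, rfl⟩
      match u with
      | Sum.inr f =>
        intro x
        rw [hb.2.2 f x, map_zero]
      | Sum.inl i =>
        have hiS : i ∉ S := by
          intro hiS
          have : Sum.inl i ∈ S.image (Sum.inl : V → V ⊕ ↥G.edgeSet) := Finset.mem_image.mpr ⟨i, hiS, rfl⟩
          rw [hT] at hu
          exact (Finset.mem_compl.mp hu) this
        have hi : ∀ e ∈ M, i ∉ (e : Sym2 V) := by
          intro e heM hie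
          exact hiS ((memS i).mpr ⟨e, heM, hie⟩)
        intro x
        -- the functional x ↦ ℓ⁅x, b (inl i)⁆ vanishes on the basis
        set g : L →ₗ[K] K :=
          { toFun := fun z => ℓ ⁅z, b (Sum.inl i)⁆
            map_add' := fun a c => by simp [add_lie]
            map_smul' := fun c a => by simp [smul_lie] } with hg
        have : g = 0 := by
          apply b.ext
          intro w
          match w with
          | Sum.inr f =>
            have : ⁅b (Sum.inr f), b (Sum.inl i)⁆ = (0 : L) := by
              rw [← lie_skew, hb.2.2 f, neg_zero]
            simp [hg, this]
          | Sum.inl k => simpa [hg] using hzero i k hi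
        have hx : g x = 0 := by rw [this]; rfl
        simpa [hg] using hx
  -- compute dimensions
  rw [hstab]
  have hli : LinearIndependent K (fun u : {u // u ∈ T} => b u) :=
    b.linearIndependent.comp _ Subtype.val_injective
  have hrange : Set.range (fun u : {u // u ∈ T} => b u) = b '' ↑T := by
    ext z
    simp [Set.range_comp]
  rw [← hrange, finrank_span_eq_card hli, Fintype.card_coe,
    Module.finrank_eq_card_basis b, hT, Finset.card_compl,
    Finset.card_image_of_injective _ Sum.inl_injective, cardS]
end

section
/- Let g be a filiform Lie algebra of dimension n ≥ 4 with adapted basis (e₁,...,eₙ) and define g_i = span(e_i,...,eₙ). Then each g_i is a characteristic ideal of g independent of the chosen adapted basis; in particular g_i = g^{i−1} for i ≥ 3, and g₂ is the preimage in g of the centralizer of (g/g⁴)² in g/g⁴. -/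
open Module

/-- The subspace `g_i` (1-based indexing: `g_i` is spanned by `e_i, …, e_n`, where
`e_m = b ⟨m-1⟩`). -/
def gSpan {K L : Type*} [Field K] [LieRing L] [LieAlgebra K L] {n : ℕ}
    (b : Basis (Fin n) K L) (i : ℕ) : Submodule K L :=
  Submodule.span K {x | ∃ j : Fin n, i ≤ j.val + 1 ∧ x = b j}

/-- `b` is an adapted (Vergne) basis of the filiform Lie algebra `L`, writing
`e_m = b ⟨m-1⟩` for the 1-based basis vectors. -/
def IsAdaptedBasis {K L : Type*} [Field K] [LieRing L] [LieAlgebra K L] {n : ℕ}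
    (hn : 3 ≤ n) (b : Basis (Fin n) K L) : Prop :=
  (∀ (i : Fin n) (h1 : 1 ≤ i.val) (h2 : i.val ≤ n - 2),
      ⁅b ⟨0, by omega⟩, b i⁆ = b ⟨i.val + 1, by omega⟩) ∧
  ⁅b ⟨0, by omega⟩, b ⟨n - 1, by omega⟩⁆ = 0 ∧
  ⁅b ⟨1, by omega⟩, b ⟨2, by omega⟩⁆ ∈ gSpan b 5 ∧
  (∀ i j : Fin n, i.val + j.val + 2 ≤ n → ⁅b i, b j⁆ ∈ gSpan b (i.val + j.val + 2))

/-- `L` is filiform of dimension `n`: nilpotent of nilpotency class exactly `n - 1`. -/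
def IsFiliform (K L : Type*) [Field K] [LieRing L] [LieAlgebra K L] (n : ℕ) : Prop :=
  Module.finrank K L = n ∧
    LieModule.lowerCentralSeries K L L (n - 1) = ⊥ ∧
    LieModule.lowerCentralSeries K L L (n - 2) ≠ ⊥



section FiliformAux
variable {K L : Type*} [Field K] [LieRing L] [LieAlgebra K L] {n : ℕ}
open LieModule

variable {K L : Type*} [Field K] [LieRing L] [LieAlgebra K L] {n : ℕ}

lemma mem_gSpan (b : Basis (Fin n) K L) {i : ℕ} {j : Fin n} (h : i ≤ j.val + 1) :
    b j ∈ gSpan b i :=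
  Submodule.subset_span ⟨j, h, rfl⟩

lemma gSpan_anti (b : Basis (Fin n) K L) {i i' : ℕ} (h : i ≤ i') : gSpan b i' ≤ gSpan b i :=
  Submodule.span_mono fun _x ⟨j, hj, hx⟩ => ⟨j, le_trans h hj, hx⟩

lemma gSpan_le {b : Basis (Fin n) K L} {i : ℕ} {p : Submodule K L}
    (h : ∀ j : Fin n, i ≤ j.val + 1 → b j ∈ p) : gSpan b i ≤ p := by
  rw [gSpan, Submodule.span_le]
  rintro x ⟨j, hj, rfl⟩
  exact h j hj

lemma card_aux (n i : ℕ) (hi : 1 ≤ i) :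
    Fintype.card {j : Fin n // i ≤ j.val + 1} = n + 1 - i := by
  rw [← Fintype.card_fin (n + 1 - i)]
  apply Fintype.card_congr
  exact
    { toFun := fun j => ⟨j.1.val - (i - 1), by have := j.1.isLt; have := j.2; omega⟩
      invFun := fun k => ⟨⟨k.val + (i - 1), by have := k.isLt; omega⟩,
        show i ≤ k.val + (i - 1) + 1 by have := k.isLt; omega⟩
      left_inv := fun j => Subtype.ext (Fin.ext (by
        have := j.2
        show j.1.val - (i - 1) + (i - 1) = j.1.val
        omega))
      right_inv := fun k => Fin.ext (by
        have := k.isLt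
        show k.val + (i - 1) - (i - 1) = k.val
        omega) }

lemma finrank_gSpan (b : Basis (Fin n) K L) {i : ℕ} (hi : 1 ≤ i) :
    Module.finrank K (gSpan b i) = n + 1 - i := by
  have h1 : gSpan b i =
      Submodule.span K (Set.range fun j : {j : Fin n // i ≤ j.val + 1} => b j.1) := by
    rw [gSpan]
    congr 1
    ext x
    constructor
    · rintro ⟨j, hj, rfl⟩; exact ⟨⟨j, hj⟩, rfl⟩
    · rintro ⟨⟨j, hj⟩, rfl⟩; exact ⟨j, hj, rfl⟩
  rw [h1]
  exact (finrank_span_eq_card (b.linearIndependent.comp _ Subtype.val_injective)).trans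
    (card_aux n i hi)

lemma repr_eq_zero_of_mem_gSpan {b : Basis (Fin n) K L} {i : ℕ} {j : Fin n} {w : L}
    (hw : w ∈ gSpan b i) (hj : j.val + 1 < i) : b.repr w j = 0 := by
  have : gSpan b i ≤ LinearMap.ker (b.coord j) := by
    apply gSpan_le
    intro p hp
    have hne : p ≠ j := by intro h; rw [h] at hp; omega
    simp [Basis.coord_apply, Basis.repr_self, Finsupp.single_apply_eq_zero, hne]
  simpa [Basis.coord_apply] using this hw

lemma mem_gSpan_two_of_repr {b : Basis (Fin n) K L} {w : L} (hn : 0 < n)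
    (hw : b.repr w ⟨0, hn⟩ = 0) : w ∈ gSpan b 2 := by
  rw [← b.sum_repr w]
  apply Submodule.sum_mem
  intro j _
  by_cases hj : j = ⟨0, hn⟩
  · rw [hj, hw, zero_smul]; exact Submodule.zero_mem _
  · exact Submodule.smul_mem _ _ (mem_gSpan b (by
      have : j.val ≠ 0 := fun h => hj (Fin.ext h)
      omega))

lemma lcs_stab (k : ℕ)
    (h : lowerCentralSeries K L L (k + 1) = lowerCentralSeries K L L k) (l : ℕ) :
    lowerCentralSeries K L L (k + l) = lowerCentralSeries K L L k := by
  induction l with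
  | zero => rfl
  | succ l ih =>
    show lowerCentralSeries K L L (k + l + 1) = _
    rw [lowerCentralSeries_succ, ih, ← lowerCentralSeries_succ]
    exact h

lemma basis_mem_lcs {b : Basis (Fin n) K L} (hn3 : 3 ≤ n) (hb : IsAdaptedBasis hn3 b) :
    ∀ m : ℕ, ∀ (hm : m < n), 1 ≤ m → b ⟨m, hm⟩ ∈ lowerCentralSeries K L L (m - 1) := by
  intro m
  induction m with
  | zero => intro _ h; omega
  | succ m ih =>
    intro hm _
    rcases Nat.eq_zero_or_pos m with h0 | h1
    · subst h0
      simp only [Nat.add_sub_cancel, lowerCentralSeries_zero]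
      exact LieSubmodule.mem_top _
    · have key := hb.1 ⟨m, by omega⟩ h1 (show m ≤ n - 2 by omega)
      have hkey : b ⟨m + 1, hm⟩ = ⁅b ⟨0, by omega⟩, b ⟨m, by omega⟩⁆ := key.symm
      rw [hkey, show m + 1 - 1 = (m - 1) + 1 by omega, LieModule.lowerCentralSeries_succ]
      exact LieSubmodule.lie_mem_lie (LieSubmodule.mem_top _) (ih (by omega) h1)

lemma gSpan_le_lcs {b : Basis (Fin n) K L} (hn3 : 3 ≤ n) (hb : IsAdaptedBasis hn3 b) (k : ℕ) :
    gSpan b (k + 2) ≤ (lowerCentralSeries K L L k).toSubmodule := by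
  apply gSpan_le
  intro j hj
  rw [LieSubmodule.mem_toSubmodule]
  have hmem := basis_mem_lcs hn3 hb j.val j.isLt (by omega)
  simp only [Fin.eta] at hmem
  exact antitone_lowerCentralSeries K L L (show k ≤ j.val - 1 by omega) hmem

lemma lcs1_codim [FiniteDimensional K L] (hn : 4 ≤ n) (hfil : IsFiliform K L n) :
    finrank K (lowerCentralSeries K L L 1).toSubmodule + 2 ≤ n := by
  by_contra hcon
  push_neg at hcon
  obtain ⟨x, hx⟩ : ∃ x : L, ∀ y : L,
      ∃ u ∈ lowerCentralSeries K L L 1, ∃ c : K, y = u + c • x := by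
    by_cases htop : (lowerCentralSeries K L L 1).toSubmodule = ⊤
    · exact ⟨0, fun y => ⟨y, by rw [← LieSubmodule.mem_toSubmodule, htop]; trivial, 0, by simp⟩⟩
    · obtain ⟨x, hx⟩ : ∃ x : L, x ∉ (lowerCentralSeries K L L 1).toSubmodule := by
        by_contra h; push_neg at h; exact htop (Submodule.eq_top_iff'.mpr h)
      refine ⟨x, fun y => ?_⟩
      have hT : (lowerCentralSeries K L L 1).toSubmodule ⊔ Submodule.span K {x} = ⊤ := by
        apply Submodule.eq_top_of_finrank_eq
        have hlt : (lowerCentralSeries K L L 1).toSubmodule <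
            (lowerCentralSeries K L L 1).toSubmodule ⊔ Submodule.span K {x} := by
          refine lt_of_le_of_ne le_sup_left fun h => hx ?_
          rw [h]
          exact Submodule.mem_sup_right (Submodule.mem_span_singleton_self x)
        have h1 := Submodule.finrank_lt_finrank_of_lt hlt
        have h2 := Submodule.finrank_le
          ((lowerCentralSeries K L L 1).toSubmodule ⊔ Submodule.span K {x})
        rw [hfil.1] at h2
        rw [hfil.1]
        omega
      have hy : y ∈ (lowerCentralSeries K L L 1).toSubmodule ⊔ Submodule.span K {x} := by
        rw [hT]; trivial
      obtain ⟨u, hu, z, hz, rfl⟩ := Submodule.mem_sup.mp hy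
      obtain ⟨c, rfl⟩ := Submodule.mem_span_singleton.mp hz
      exact ⟨u, (LieSubmodule.mem_toSubmodule _).mp hu, c, rfl⟩
  have hle : lowerCentralSeries K L L 1 ≤ lowerCentralSeries K L L 2 := by
    have h2 : lowerCentralSeries K L L 2 =
        ⁅(⊤ : LieIdeal K L), lowerCentralSeries K L L 1⁆ := lowerCentralSeries_succ K L L 1
    rw [show (1:ℕ) = 0 + 1 from rfl, LieModule.lowerCentralSeries_succ,
      LieModule.lowerCentralSeries_zero]
    rw [LieSubmodule.lie_le_iff]
    intro a _ m _
    obtain ⟨u, hu, c, rfl⟩ := hx a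
    obtain ⟨v, hv, d, rfl⟩ := hx m
    have m1 : ⁅u, v⁆ ∈ lowerCentralSeries K L L 2 := by
      rw [h2]; exact LieSubmodule.lie_mem_lie (LieSubmodule.mem_top _) hv
    have m2 : ⁅x, v⁆ ∈ lowerCentralSeries K L L 2 := by
      rw [h2]; exact LieSubmodule.lie_mem_lie (LieSubmodule.mem_top _) hv
    have m3 : ⁅x, u⁆ ∈ lowerCentralSeries K L L 2 := by
      rw [h2]; exact LieSubmodule.lie_mem_lie (LieSubmodule.mem_top _) hu
    have m4 : ⁅u, x⁆ ∈ lowerCentralSeries K L L 2 := by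
      rw [← lie_skew]; exact neg_mem m3
    rw [add_lie, lie_add, lie_add]
    refine add_mem (add_mem m1 ?_) (add_mem ?_ ?_)
    · rw [lie_smul]; exact SMulMemClass.smul_mem _ m4
    · rw [smul_lie]; exact SMulMemClass.smul_mem _ m2
    · rw [smul_lie, lie_smul, lie_self, smul_zero, smul_zero]; exact zero_mem _
  have heq : lowerCentralSeries K L L (1 + 1) = lowerCentralSeries K L L 1 :=
    le_antisymm (antitone_lowerCentralSeries K L L (by omega)) hle
  have e1 := lcs_stab 1 heq (n - 3)
  have e2 := lcs_stab 1 heq (n - 2)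
  rw [show 1 + (n - 3) = n - 2 by omega] at e1
  rw [show 1 + (n - 2) = n - 1 by omega] at e2
  exact hfil.2.2 (by rw [e1, ← e2, hfil.2.1])

lemma lcs_finrank_le [FiniteDimensional K L] (hn : 4 ≤ n) (hfil : IsFiliform K L n) :
    ∀ k, 1 ≤ k → k ≤ n - 1 →
      finrank K (lowerCentralSeries K L L k).toSubmodule + k + 1 ≤ n := by
  intro k
  induction k with
  | zero => omega
  | succ k ih =>
    intro _ hk1
    rcases Nat.eq_zero_or_pos k with h0 | hpos
    · subst h0
      have := lcs1_codim hn hfil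
      show finrank K (lowerCentralSeries K L L 1).toSubmodule + (0 + 1) + 1 ≤ n
      omega
    · have hne : lowerCentralSeries K L L (k + 1) ≠ lowerCentralSeries K L L k := by
        intro h
        have e1 := lcs_stab k h (n - 2 - k)
        have e2 := lcs_stab k h (n - 1 - k)
        rw [show k + (n - 2 - k) = n - 2 by omega] at e1
        rw [show k + (n - 1 - k) = n - 1 by omega] at e2
        exact hfil.2.2 (by rw [e1, ← e2, hfil.2.1])
      have hlt : (lowerCentralSeries K L L (k + 1)).toSubmodule <
          (lowerCentralSeries K L L k).toSubmodule := by
        refine lt_of_le_of_ne ?_ ?_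
        · rw [LieSubmodule.toSubmodule_le_toSubmodule]
          exact antitone_lowerCentralSeries K L L (by omega)
        · intro h
          exact hne (by
            ext y
            rw [← LieSubmodule.mem_toSubmodule, h, LieSubmodule.mem_toSubmodule])
      have h1 := Submodule.finrank_lt_finrank_of_lt hlt
      have h2 := ih hpos (by omega)
      omega

lemma gSpan_eq_lcs [FiniteDimensional K L] (hn : 4 ≤ n) (hfil : IsFiliform K L n)
    {b : Basis (Fin n) K L} (hn3 : 3 ≤ n) (hb : IsAdaptedBasis hn3 b) :
    ∀ i, 3 ≤ i → i ≤ n + 1 →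
      gSpan b i = (lowerCentralSeries K L L (i - 2)).toSubmodule := by
  intro i h3 hi
  have hle : gSpan b i ≤ (lowerCentralSeries K L L (i - 2)).toSubmodule := by
    have := gSpan_le_lcs hn3 hb (i - 2)
    rwa [show i - 2 + 2 = i by omega] at this
  apply (Submodule.eq_of_le_of_finrank_le hle ?_)
  rw [finrank_gSpan b (by omega : 1 ≤ i)]
  rcases Nat.lt_or_ge (i - 2) (n - 1) with h | h
  · have := lcs_finrank_le hn hfil (i - 2) (by omega) (by omega)
    omega
  · have hi' : i = n + 1 := by omega
    subst hi'
    rw [show n + 1 - 2 = n - 1 by omega, hfil.2.1]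
    simp

lemma core_bracket [FiniteDimensional K L] (hn : 4 ≤ n) (hfil : IsFiliform K L n)
    {b : Basis (Fin n) K L} (hn3 : 3 ≤ n) (hb : IsAdaptedBasis hn3 b) :
    ∀ p j : Fin n, 1 ≤ p.val → 2 ≤ j.val → ⁅b p, b j⁆ ∈ gSpan b 5 := by
  have h5 : gSpan b 5 = (lowerCentralSeries K L L 3).toSubmodule :=
    gSpan_eq_lcs hn hfil hn3 hb 5 (by omega) (by omega)
  have key : ∀ (x : L) (j : Fin n), 3 ≤ j.val → ⁅x, b j⁆ ∈ gSpan b 5 := by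
    intro x j hj
    rw [h5, LieSubmodule.mem_toSubmodule]
    have hmem := basis_mem_lcs hn3 hb j.val j.isLt (by omega)
    simp only [Fin.eta] at hmem
    have h1 : ⁅x, b j⁆ ∈ lowerCentralSeries K L L (j.val - 1 + 1) := by
      rw [LieModule.lowerCentralSeries_succ]
      exact LieSubmodule.lie_mem_lie (LieSubmodule.mem_top _) hmem
    exact antitone_lowerCentralSeries K L L (show 3 ≤ j.val - 1 + 1 by omega) h1
  intro p j hp hj
  rcases Nat.lt_or_ge j.val 3 with hj3 | hj3
  · have hjeq : j = ⟨2, by omega⟩ := Fin.ext (by show j.val = 2; omega)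
    rcases Nat.lt_or_ge p.val 2 with hp2 | hp2
    · have hpeq : p = ⟨1, by omega⟩ := Fin.ext (by show p.val = 1; omega)
      rw [hpeq, hjeq]; exact hb.2.2.1
    rcases Nat.lt_or_ge p.val 3 with hp3 | hp3
    · have hpj : p = j := Fin.ext (by omega : p.val = j.val)
      rw [hpj, lie_self]; exact zero_mem _
    · rw [← lie_skew]
      exact neg_mem (key (b j) p hp3)
  · exact key (b p) j hj3

lemma bracket_mem_g5 [FiniteDimensional K L] (hn : 4 ≤ n) (hfil : IsFiliform K L n)
    {b : Basis (Fin n) K L} (hn3 : 3 ≤ n) (hb : IsAdaptedBasis hn3 b) :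
    ∀ x ∈ gSpan b 2, ∀ z ∈ gSpan b 3, ⁅x, z⁆ ∈ gSpan b 5 := by
  have step1 : ∀ j : Fin n, 2 ≤ j.val → ∀ x ∈ gSpan b 2, ⁅b j, x⁆ ∈ gSpan b 5 := by
    intro j hj x hx
    have hsub : gSpan b 2 ≤ Submodule.comap (LieAlgebra.ad K L (b j)) (gSpan b 5) := by
      apply gSpan_le
      intro p hp
      simp only [Submodule.mem_comap, LieAlgebra.ad_apply]
      rw [← lie_skew]
      exact neg_mem (core_bracket hn hfil hn3 hb p j (by omega) hj)
    simpa [LieAlgebra.ad_apply] using hsub hx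
  intro x hx z hz
  have hsub : gSpan b 3 ≤ Submodule.comap (LieAlgebra.ad K L x) (gSpan b 5) := by
    apply gSpan_le
    intro j hj
    simp only [Submodule.mem_comap, LieAlgebra.ad_apply]
    rw [← lie_skew]
    exact neg_mem (step1 j (by omega) x hx)
  simpa [LieAlgebra.ad_apply] using hsub hz

lemma gSpan2_eq [FiniteDimensional K L] (hn : 4 ≤ n) (hfil : IsFiliform K L n)
    {b : Basis (Fin n) K L} (hn3 : 3 ≤ n) (hb : IsAdaptedBasis hn3 b) :
    (gSpan b 2 : Set L) = {x : L | ∀ z ∈ lowerCentralSeries K L L 1,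
        ⁅x, z⁆ ∈ lowerCentralSeries K L L 3} := by
  have h3 : gSpan b 3 = (lowerCentralSeries K L L 1).toSubmodule :=
    gSpan_eq_lcs hn hfil hn3 hb 3 (by omega) (by omega)
  have h5 : gSpan b 5 = (lowerCentralSeries K L L 3).toSubmodule :=
    gSpan_eq_lcs hn hfil hn3 hb 5 (by omega) (by omega)
  ext x
  simp only [SetLike.mem_coe, Set.mem_setOf_eq]
  constructor
  · intro hx z hz
    have hz' : z ∈ gSpan b 3 := by
      rw [h3]; exact (LieSubmodule.mem_toSubmodule _).mpr hz
    have hmem := bracket_mem_g5 hn hfil hn3 hb x hx z hz'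
    rw [h5] at hmem
    exact (LieSubmodule.mem_toSubmodule _).mp hmem
  · intro hx
    set c : K := b.repr x ⟨0, by omega⟩ with hc
    have hy : x - c • b ⟨0, by omega⟩ ∈ gSpan b 2 := by
      apply mem_gSpan_two_of_repr (by omega)
      simp [map_sub, map_smul, Basis.repr_self, hc]
    have hb2 : (b ⟨2, by omega⟩ : L) ∈ lowerCentralSeries K L L 1 :=
      basis_mem_lcs hn3 hb 2 (by omega) (by omega)
    have h1 : ⁅x, b ⟨2, by omega⟩⁆ ∈ gSpan b 5 := by
      rw [h5]; exact (LieSubmodule.mem_toSubmodule _).mpr (hx _ hb2)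
    have h2 : ⁅x - c • b ⟨0, by omega⟩, b ⟨2, by omega⟩⁆ ∈ gSpan b 5 :=
      bracket_mem_g5 hn hfil hn3 hb _ hy _ (mem_gSpan b (show 3 ≤ 2 + 1 by omega))
    have h4 : (c • ⁅b ⟨0, by omega⟩, b ⟨2, by omega⟩⁆ : L) ∈ gSpan b 5 := by
      have heq : (c • ⁅b ⟨0, by omega⟩, b ⟨2, by omega⟩⁆ : L)
          = ⁅x, b ⟨2, by omega⟩⁆ - ⁅x - c • b ⟨0, by omega⟩, b ⟨2, by omega⟩⁆ := by
        rw [sub_lie, smul_lie]; abel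
      rw [heq]; exact sub_mem h1 h2
    have hkey := hb.1 ⟨2, by omega⟩ (by norm_num) (show 2 ≤ n - 2 by omega)
    rw [hkey] at h4
    have hzero : c = 0 := by
      have hr := repr_eq_zero_of_mem_gSpan (j := ⟨2 + 1, by omega⟩) h4
        (show 2 + 1 + 1 < 5 by omega)
      simpa [map_smul, Basis.repr_self] using hr
    simpa [hzero] using hy

lemma gSpan_map (b : Basis (Fin n) K L) (f : L ≃ₗ[K] L) (i : ℕ) :
    gSpan (b.map f) i = Submodule.map (f : L →ₗ[K] L) (gSpan b i) := by
  rw [gSpan, gSpan, Submodule.map_span]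
  congr 1
  ext x
  constructor
  · rintro ⟨j, hj, rfl⟩
    exact ⟨b j, ⟨j, hj, rfl⟩, (b.map_apply f j).symm⟩
  · rintro ⟨y, ⟨j, hj, rfl⟩, rfl⟩
    exact ⟨j, hj, (b.map_apply f j).symm⟩

lemma isAdapted_map {b : Basis (Fin n) K L} (hn3 : 3 ≤ n) (hb : IsAdaptedBasis hn3 b)
    (f : L ≃ₗ⁅K⁆ L) : IsAdaptedBasis hn3 (b.map f.toLinearEquiv) := by
  have hba : ∀ j : Fin n, b.map f.toLinearEquiv j = f.toLinearEquiv (b j) :=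
    fun j => b.map_apply f.toLinearEquiv j
  have hlie : ∀ x y : L, ⁅f.toLinearEquiv x, f.toLinearEquiv y⁆ = f.toLinearEquiv ⁅x, y⁆ :=
    fun x y => (f.toLieHom.map_lie x y).symm
  refine ⟨?_, ?_, ?_, ?_⟩
  · intro i h1 h2
    rw [hba, hba, hba, hlie, hb.1 i h1 h2]
  · rw [hba, hba, hlie, hb.2.1, map_zero]
  · rw [hba, hba, hlie, gSpan_map]
    exact Submodule.mem_map_of_mem hb.2.2.1
  · intro i j hij
    rw [hba, hba, hlie, gSpan_map]
    exact Submodule.mem_map_of_mem (hb.2.2.2 i j hij)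

lemma gSpan_eq_gSpan [FiniteDimensional K L] (hn : 4 ≤ n) (hfil : IsFiliform K L n)
    {b b' : Basis (Fin n) K L} (hn3 : 3 ≤ n)
    (hb : IsAdaptedBasis hn3 b) (hb' : IsAdaptedBasis hn3 b') :
    ∀ i, 2 ≤ i → i ≤ n → gSpan b i = gSpan b' i := by
  intro i h2 hi
  rcases Nat.lt_or_ge i 3 with h | h
  · have hi2 : i = 2 := by omega
    subst hi2
    apply SetLike.ext'
    rw [gSpan2_eq hn hfil hn3 hb, gSpan2_eq hn hfil hn3 hb']
  · rw [gSpan_eq_lcs hn hfil hn3 hb i h (by omega),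
      gSpan_eq_lcs hn hfil hn3 hb' i h (by omega)]

end FiliformAux

/-- For a filiform Lie algebra of dimension `n ≥ 4` with adapted basis, the subspaces
`g_i = span(e_i, …, e_n)` (for `2 ≤ i ≤ n`) do not depend on the chosen adapted basis and
are characteristic ideals; moreover `g_i = g^{i-1}` for `i ≥ 3` and `g₂` is the preimage
of the centralizer of `(g/g⁴)²` in `g/g⁴`, i.e.
`g₂ = {x | ∀ z ∈ g², ⁅x,z⁆ ∈ g⁴}`. -/
theorem filiform_gi_characteristic
    (K L : Type*) [Field K] [CharZero K] [LieRing L] [LieAlgebra K L]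
    [FiniteDimensional K L] (n : ℕ) (hn : 4 ≤ n) (hfil : IsFiliform K L n)
    (b b' : Basis (Fin n) K L)
    (hb : IsAdaptedBasis (by omega) b) (hb' : IsAdaptedBasis (by omega) b') :
    (∀ i : ℕ, 2 ≤ i → i ≤ n →
      gSpan b i = gSpan b' i ∧
      (∃ I : LieIdeal K L, I.toSubmodule = gSpan b i) ∧
      (∀ f : L ≃ₗ⁅K⁆ L,
        Submodule.map (f.toLinearEquiv : L →ₗ[K] L) (gSpan b i) = gSpan b i)) ∧
    (∀ i : ℕ, 3 ≤ i → i ≤ n →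
      gSpan b i = (LieModule.lowerCentralSeries K L L (i - 2)).toSubmodule) ∧
    ((gSpan b 2 : Set L) =
      {x : L | ∀ z ∈ LieModule.lowerCentralSeries K L L 1,
        ⁅x, z⁆ ∈ LieModule.lowerCentralSeries K L L 3}) := by
  have hn3 : (3 : ℕ) ≤ n := by omega
  refine ⟨?_, ?_, ?_⟩
  · intro i h2 hi
    refine ⟨gSpan_eq_gSpan hn hfil hn3 hb hb' i h2 hi, ?_, ?_⟩
    · rcases Nat.lt_or_ge i 3 with h | h
      · have hi2 : i = 2 := by omega
        subst hi2
        refine ⟨{ toSubmodule := gSpan b 2, lie_mem := fun {x m} _ => ?_ }, rfl⟩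
        have h1 : ⁅x, m⁆ ∈ LieModule.lowerCentralSeries K L L 1 := by
          rw [show (1 : ℕ) = 0 + 1 from rfl, LieModule.lowerCentralSeries_succ]
          refine LieSubmodule.lie_mem_lie (LieSubmodule.mem_top x) ?_
          rw [LieModule.lowerCentralSeries_zero]
          exact LieSubmodule.mem_top m
        have h2 : ⁅x, m⁆ ∈ gSpan b 3 := by
          rw [gSpan_eq_lcs hn hfil hn3 hb 3 (by omega) (by omega)]
          exact (LieSubmodule.mem_toSubmodule _).mpr h1
        exact gSpan_anti b (by omega) h2
      · exact ⟨LieModule.lowerCentralSeries K L L (i - 2),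
          (gSpan_eq_lcs hn hfil hn3 hb i h (by omega)).symm⟩
    · intro f
      have hb'' := isAdapted_map hn3 hb f
      have heq := gSpan_eq_gSpan hn hfil hn3 hb'' hb i h2 hi
      rw [gSpan_map b f.toLinearEquiv i] at heq
      exact heq
  · intro i h3 hi
    exact gSpan_eq_lcs hn hfil hn3 hb i h3 (by omega)
  · exact gSpan2_eq hn hfil hn3 hb
end
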